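/- arXiv:2005.11766 — 5 statements merged into one kernel-verified Lean document; each statement's English description precedes it below -/
import Mathlib

section
/- Every finite distance-hereditary graph with at least two vertices has either a pendant vertex or two distinct vertices that are twins. -/
open Set

universe u v

variable {Ω : Type*}

/-- The diagonal relation `1_Δ` of a set `Δ ⊆ Ω`. -/
def diagRel (Δ : Set Ω) : Set (Ω × Ω) := {p | p.1 = p.2 ∧ p.1 ∈ Δ}

/-- The number of points `γ` with `(p.1, γ) ∈ r` and `(γ, p.2) ∈ s`. -/
noncomputable def interNum (r s : Set (Ω × Ω)) (p : Ω × Ω) : ℕ :=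
  {γ : Ω | (p.1, γ) ∈ r ∧ (γ, p.2) ∈ s}.ncard

/-- A coherent configuration on `Ω`: a partition `S` of `Ω × Ω` such that the diagonal
is a union of classes, `S` is closed under transposition, and the intersection numbers
are well defined. -/
structure CoherentConfiguration (Ω : Type u) where
  S : Set (Set (Ω × Ω))
  isPartition : Setoid.IsPartition S
  diag_isRelation : ∃ T ⊆ S, ⋃₀ T = diagRel (Set.univ : Set Ω)
  swap_mem : ∀ s ∈ S, {p : Ω × Ω | (p.2, p.1) ∈ s} ∈ S
  coherent : ∀ r ∈ S, ∀ s ∈ S, ∀ t ∈ S, ∀ p ∈ t, ∀ q ∈ t,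
    interNum r s p = interNum r s q

namespace CoherentConfiguration

/-- A relation of `X` is a union of basis relations of `X`. -/
def IsRelation (X : CoherentConfiguration Ω) (r : Set (Ω × Ω)) : Prop :=
  ∃ T ⊆ X.S, ⋃₀ T = r

/-- A fiber of `X` is a set `Δ` with `1_Δ` a basis relation. -/
def IsFiber (X : CoherentConfiguration Ω) (Δ : Set Ω) : Prop :=
  diagRel Δ ∈ X.S

end CoherentConfiguration

/-- `X ≤ Y` iff every relation of `X` is a relation of `Y`. -/
def CCle (X Y : CoherentConfiguration Ω) : Prop :=
  ∀ r, X.IsRelation r → Y.IsRelation r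

/-- The arc set of a graph, as a set of ordered pairs. -/
def adjRel (G : SimpleGraph Ω) : Set (Ω × Ω) := {p | G.Adj p.1 p.2}

/-- `X = WL(G)`: the smallest coherent configuration having the arc set of `G`
among its relations. -/
def IsWL (G : SimpleGraph Ω) (X : CoherentConfiguration Ω) : Prop :=
  X.IsRelation (adjRel G) ∧
    ∀ Y : CoherentConfiguration Ω, Y.IsRelation (adjRel G) → CCle X Y

/-- `X = WL(G)_π`: the smallest coherent configuration having the arc set of `G`
and every `1_Δ`, `Δ ∈ π`, among its relations. -/
def IsWLPart (G : SimpleGraph Ω) (π : Set (Set Ω)) (X : CoherentConfiguration Ω) : Prop :=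
  X.IsRelation (adjRel G) ∧ (∀ Δ ∈ π, X.IsRelation (diagRel Δ)) ∧
    ∀ Y : CoherentConfiguration Ω, Y.IsRelation (adjRel G) →
      (∀ Δ ∈ π, Y.IsRelation (diagRel Δ)) → CCle X Y

/-- A graph is distance-hereditary if in every connected induced subgraph the distance
function is the same as in the graph itself. -/
def DistanceHereditary {V : Type*} (G : SimpleGraph V) : Prop :=
  ∀ s : Set V, (G.induce s).Connected →
    ∀ u v : s, (G.induce s).dist u v = G.dist u.1 v.1

/-- Two vertices are twins in a graph if every other vertex is adjacent to both
or to neither. -/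
def IsTwin (G : SimpleGraph Ω) (a b : Ω) : Prop :=
  ∀ γ, γ ≠ a → γ ≠ b → (G.Adj γ a ↔ G.Adj γ b)

/-- Two points are `X`-twins if for every other point `γ`, the basis relation containing
`(γ, a)` coincides with the one containing `(γ, b)`. -/
def XTwin (X : CoherentConfiguration Ω) (a b : Ω) : Prop :=
  ∀ γ, γ ≠ a → γ ≠ b → ∀ s ∈ X.S, ((γ, a) ∈ s ↔ (γ, b) ∈ s)

/-- The relation `e_X` of being `X`-twins, as a set of pairs. -/
def twinRel (X : CoherentConfiguration Ω) : Set (Ω × Ω) := {p | XTwin X p.1 p.2}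

/-- An equivalence relation on `Ω`, given as a set of pairs. -/
def IsEquivSet (e : Set (Ω × Ω)) : Prop :=
  (∀ a, (a, a) ∈ e) ∧ (∀ a b, (a, b) ∈ e → (b, a) ∈ e) ∧
    (∀ a b c, (a, b) ∈ e → (b, c) ∈ e → (a, c) ∈ e)

/-- A parabolic of `X` is an equivalence relation which is a relation of `X`. -/
def IsParabolic (X : CoherentConfiguration Ω) (e : Set (Ω × Ω)) : Prop :=
  IsEquivSet e ∧ X.IsRelation e

/-- The dot product (composition) of two relations. -/
def relComp (r s : Set (Ω × Ω)) : Set (Ω × Ω) :=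
  {p | ∃ c, (p.1, c) ∈ r ∧ (c, p.2) ∈ s}

/-- An algebraic isomorphism between coherent configurations: a bijection between the
sets of basis relations preserving the intersection numbers. -/
structure AlgIso {Ω : Type u} {Ω' : Type v} (X : CoherentConfiguration Ω)
    (X' : CoherentConfiguration Ω') where
  toFun : Set (Ω × Ω) → Set (Ω' × Ω')
  bijOn : Set.BijOn toFun X.S X'.S
  card_eq : ∀ r ∈ X.S, ∀ s ∈ X.S, ∀ t ∈ X.S, ∀ p ∈ t, ∀ p' ∈ toFun t,
      interNum r s p = interNum (toFun r) (toFun s) p'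

/-- `X` is separable: every algebraic isomorphism from `X` to another coherent
configuration is induced by a bijection of the point sets. -/
def CCSeparable {Ω : Type u} (X : CoherentConfiguration Ω) : Prop :=
  ∀ (Ω' : Type u), Finite Ω' → ∀ (X' : CoherentConfiguration Ω') (φ : AlgIso X X'),
    ∃ f : Ω → Ω', Function.Bijective f ∧ ∀ s ∈ X.S, φ.toFun s = Prod.map f f '' s

/-- `Ω₋(m)`. -/
def OmegaMinus (m : Set (Ω × Ω)) : Set Ω := {a | ∃ b, (a, b) ∈ m}

/-- `Ω₊(m)`. -/
def OmegaPlus (m : Set (Ω × Ω)) : Set Ω := {b | ∃ a, (a, b) ∈ m}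

/-- A matching of `X`: an irreflexive basis relation of valency one in both directions. -/
def IsMatchingCC (X : CoherentConfiguration Ω) (m : Set (Ω × Ω)) : Prop :=
  m ∈ X.S ∧ (∀ p ∈ m, p.1 ≠ p.2) ∧
    (∀ a b c, (a, b) ∈ m → (a, c) ∈ m → b = c) ∧
    (∀ a b c, (a, c) ∈ m → (b, c) ∈ m → a = b)

/-- A pendant matching of `X` with respect to the graph `G`. -/
def IsPendantMatching (G : SimpleGraph Ω) (X : CoherentConfiguration Ω)
    (m : Set (Ω × Ω)) : Prop :=
  IsMatchingCC X m ∧ OmegaMinus m ≠ OmegaPlus m ∧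
    ∀ p ∈ m, G.Adj p.1 p.2 ∧ ∀ c, G.Adj p.1 c → c = p.2

/-- A twin matching of `X` with respect to the graph `G`. -/
def IsTwinMatching (G : SimpleGraph Ω) (X : CoherentConfiguration Ω)
    (m : Set (Ω × Ω)) : Prop :=
  IsMatchingCC X m ∧ OmegaMinus m ≠ OmegaPlus m ∧ ∀ p ∈ m, IsTwin G p.1 p.2

/-- The quotient graph of `G` modulo a (twin) equivalence relation `r`: two distinct
classes are adjacent iff every vertex of one is adjacent to every vertex of the other. -/
def quotGraph (G : SimpleGraph Ω) (r : Ω → Ω → Prop) : SimpleGraph (Quot r) where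
  Adj c d := c ≠ d ∧ ∀ a b : Ω, Quot.mk r a = c → Quot.mk r b = d → G.Adj a b
  symm := ⟨fun _ _ h => ⟨h.1.symm, fun a b ha hb => (h.2 b a hb ha).symm⟩⟩
  loopless := ⟨fun _ h => h.1 rfl⟩

/-- The restriction of a relation on `Ω` to the complement of `Δ`. -/
def restrictRel (Δ : Set Ω) (s : Set (Ω × Ω)) : Set (↥(Δᶜ) × ↥(Δᶜ)) :=
  {p | ((p.1 : Ω), (p.2 : Ω)) ∈ s}

/-- The restriction of a subset of `Ω` to the complement of `Δ`. -/
def restrictSet (Δ Γ : Set Ω) : Set ↥(Δᶜ) := {x | (x : Ω) ∈ Γ}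

namespace DHProof

variable {G : SimpleGraph Ω}

/-- outgoing hom from induced subgraph -/
def outHom (s : Set Ω) : G.induce s →g G := ⟨Subtype.val, fun {a b} h => h⟩

lemma induce_adj {s : Set Ω} {a b : ↥s} (h : G.Adj a.1 b.1) : (G.induce s).Adj a b := h

lemma reach_in_induce {s : Set Ω} {a b : Ω} (W : G.Walk a b)
    (hs : ∀ z ∈ W.support, z ∈ s) (ha : a ∈ s) (hb : b ∈ s) :
    (G.induce s).Reachable ⟨a, ha⟩ ⟨b, hb⟩ := by
  induction W with
  | nil => rfl
  | @cons a c b h p ih =>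
    have hc : c ∈ s := hs c (by simp)
    have step : (G.induce s).Adj ⟨a, ha⟩ ⟨c, hc⟩ := induce_adj h
    exact step.reachable.trans (ih (fun z hz => hs z (by simp [hz])) hc hb)

lemma master (hDH : DistanceHereditary G) {s : Set Ω} (hconn : (G.induce s).Connected)
    {p q r : Ω} (hp : p ∈ s) (hq : q ∈ s) (hr : r ∈ s)
    (huniq : ∀ z ∈ s, G.Adj p z → z = q) (hpr : p ≠ r) :
    G.dist q r + 1 ≤ G.dist p r := by
  have hre : (G.induce s).Reachable ⟨p, hp⟩ ⟨r, hr⟩ := hconn.preconnected _ _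
  obtain ⟨W, hW⟩ := hre.exists_walk_length_eq_dist
  have hdh := hDH s hconn ⟨p, hp⟩ ⟨r, hr⟩
  cases W with
  | nil => exact absurd rfl hpr
  | @cons _ z _ h W' =>
    have hz : z.1 = q := huniq z.1 z.2 h
    have hle : G.dist z.1 r ≤ W'.length := by
      have h1 := G.dist_le (W'.map (outHom s))
      rw [SimpleGraph.Walk.length_map] at h1; exact h1
    rw [hz] at hle
    simp only [SimpleGraph.Walk.length_cons] at hW
    rw [hdh] at hW
    simp only [] at hW
    have hW' : W'.length + 1 = G.dist p r := by simpa using hW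
    omega

lemma adj_dist_succ {u a b : Ω} (h : G.Adj a b) (hr : G.Reachable u a) :
    G.dist u b ≤ G.dist u a + 1 := by
  obtain ⟨W, hW⟩ := hr.exists_walk_length_eq_dist
  have := G.dist_le (W.concat h)
  rwa [SimpleGraph.Walk.length_concat, hW] at this

lemma reach_of_dist {u a : Ω} (h : G.dist u a ≠ 0) : G.Reachable u a :=
  SimpleGraph.Reachable.of_dist_ne_zero h

lemma reach_adj {u a b : Ω} (hr : G.Reachable u a) (h : G.Adj a b) : G.Reachable u b :=
  hr.trans h.reachable

lemma two_le_dist {p q : Ω} (hre : G.Reachable p q) (hne : p ≠ q) (hna : ¬ G.Adj p q) :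
    2 ≤ G.dist p q := by
  have h0 : G.dist p q ≠ 0 := by
    rw [ne_eq, hre.dist_eq_zero_iff]; exact hne
  have h1 : G.dist p q ≠ 1 := by
    intro h; exact hna (SimpleGraph.dist_eq_one_iff_adj.mp h)
  omega

lemma dist_le_two {p m q : Ω} (h1 : G.Adj p m) (h2 : G.Adj m q) : G.dist p q ≤ 2 := by
  have := G.dist_le ((h1.toWalk).append h2.toWalk)
  simpa using this

/-- on a shortest walk, distances decompose -/
lemma walk_split [DecidableEq Ω] {u c z : Ω} (W : G.Walk u c) (hz : z ∈ W.support) :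
    G.dist u z + G.dist z c ≤ W.length := by
  have hspec := W.take_spec hz
  have hlen : (W.takeUntil z hz).length + (W.dropUntil z hz).length = W.length := by
    rw [← SimpleGraph.Walk.length_append, hspec]
  have h1 := G.dist_le (W.takeUntil z hz)
  have h2 := G.dist_le (W.dropUntil z hz)
  omega

lemma reach_of_mem_support [DecidableEq Ω] {u c z : Ω} (W : G.Walk u c) (hz : z ∈ W.support) :
    G.Reachable u z ∧ G.Reachable z c :=
  ⟨⟨W.takeUntil z hz⟩, ⟨W.dropUntil z hz⟩⟩



lemma connected_base {s : Set Ω} {b : Ω} (hb : b ∈ s)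
    (h : ∀ z (hz : z ∈ s), (G.induce s).Reachable ⟨z, hz⟩ ⟨b, hb⟩) :
    (G.induce s).Connected := by
  rw [SimpleGraph.connected_iff]
  refine ⟨fun x y => (h x.1 x.2).trans (h y.1 y.2).symm, ⟨⟨b, hb⟩⟩⟩

variable [DecidableEq Ω]

/-- KL1: adjacent same-level vertices have the same lower neighbours. -/
lemma same_down (hDH : DistanceHereditary G) {u w1 w2 c : Ω} {i : ℕ} (h2i : 2 ≤ i)
    (hw1 : G.dist u w1 = i) (hw2 : G.dist u w2 = i) (hadj : G.Adj w1 w2)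
    (hc : G.Adj c w1) (hlc : G.dist u c = i - 1) : G.Adj c w2 := by
  by_contra hn
  have hrc : G.Reachable u c := reach_of_dist (by omega)
  obtain ⟨W, hW⟩ := hrc.exists_walk_length_eq_dist
  set s : Set Ω := {z | z ∈ W.support ∨ z = w1 ∨ z = w2} with hs
  have hw1s : w1 ∈ s := Or.inr (Or.inl rfl)
  have hw2s : w2 ∈ s := Or.inr (Or.inr rfl)
  have hus : u ∈ s := Or.inl W.start_mem_support
  have hcs : c ∈ s := Or.inl W.end_mem_support
  have hsupp : ∀ z ∈ W.support, G.Adj w2 z → z = c := by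
    intro z hz hadj2
    have h1 := walk_split W hz
    rw [hW, hlc] at h1
    have hru : G.Reachable u z := (reach_of_mem_support W hz).1
    have h2 : G.dist u w2 ≤ G.dist u z + 1 := adj_dist_succ hadj2.symm hru
    have h3 : G.dist z c = 0 := by omega
    exact ((reach_of_mem_support W hz).2.dist_eq_zero_iff).mp h3
  have huniq : ∀ z ∈ s, G.Adj w2 z → z = w1 := by
    intro z hzs hadj2
    rcases hzs with hz | hz | hz
    · exfalso; exact hn ((hsupp z hz hadj2 ▸ hadj2).symm)
    · exact hz
    · exact absurd (hz ▸ hadj2) G.irrefl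
  have hreachbase : ∀ z (hz : z ∈ s), (G.induce s).Reachable ⟨z, hz⟩ ⟨u, hus⟩ := by
    have hcu : (G.induce s).Reachable ⟨c, hcs⟩ ⟨u, hus⟩ :=
      (reach_in_induce W (fun y hy => Or.inl hy) hus hcs).symm
    have hw1u : (G.induce s).Reachable ⟨w1, hw1s⟩ ⟨u, hus⟩ :=
      ((induce_adj (s := s) (a := ⟨c, hcs⟩) (b := ⟨w1, hw1s⟩) hc).reachable).symm.trans hcu
    have hw2u : (G.induce s).Reachable ⟨w2, hw2s⟩ ⟨u, hus⟩ :=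
      ((induce_adj (s := s) (a := ⟨w1, hw1s⟩) (b := ⟨w2, hw2s⟩) hadj).reachable).symm.trans hw1u
    intro z hz
    rcases hz with hz | hz | hz
    · exact (reach_in_induce (W.takeUntil z hz)
        (fun y hy => Or.inl (W.support_takeUntil_subset hz hy)) hus (Or.inl hz)).symm
    · subst hz; exact hw1u
    · subst hz; exact hw2u
  have hconn := connected_base (G := G) hus hreachbase
  have hmast := master hDH hconn hw2s hw1s hus huniq (by
    intro hh; rw [hh] at hw2; rw [SimpleGraph.dist_self] at hw2; omega)
  rw [SimpleGraph.dist_comm (u := w1), SimpleGraph.dist_comm (u := w2), hw1, hw2] at hmast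
  omega


/-- F1: two same-level vertices with a common upper neighbour share lower neighbours. -/
lemma same_down_top (hDH : DistanceHereditary G) {u w1 w2 x c : Ω} {i : ℕ} (h2i : 2 ≤ i)
    (hw1 : G.dist u w1 = i) (hw2 : G.dist u w2 = i) (hx : G.dist u x = i + 1)
    (hxw1 : G.Adj x w1) (hxw2 : G.Adj x w2) (hnadj : ¬ G.Adj w1 w2)
    (hc : G.Adj c w1) (hlc : G.dist u c = i - 1) : G.Adj c w2 := by
  by_contra hn
  have hrc : G.Reachable u c := reach_of_dist (by omega)
  obtain ⟨W, hW⟩ := hrc.exists_walk_length_eq_dist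
  set s : Set Ω := {z | z ∈ W.support ∨ z = w1 ∨ z = x ∨ z = w2} with hs
  have hw1s : w1 ∈ s := Or.inr (Or.inl rfl)
  have hxs : x ∈ s := Or.inr (Or.inr (Or.inl rfl))
  have hw2s : w2 ∈ s := Or.inr (Or.inr (Or.inr rfl))
  have hus : u ∈ s := Or.inl W.start_mem_support
  have hcs : c ∈ s := Or.inl W.end_mem_support
  have hsupp : ∀ z ∈ W.support, G.Adj w2 z → z = c := by
    intro z hz hadj2
    have h1 := walk_split W hz
    rw [hW, hlc] at h1
    have hru : G.Reachable u z := (reach_of_mem_support W hz).1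
    have h2 : G.dist u w2 ≤ G.dist u z + 1 := adj_dist_succ hadj2.symm hru
    have h3 : G.dist z c = 0 := by omega
    exact ((reach_of_mem_support W hz).2.dist_eq_zero_iff).mp h3
  have huniq : ∀ z ∈ s, G.Adj w2 z → z = x := by
    intro z hzs hadj2
    rcases hzs with hz | hz | hz | hz
    · exfalso; exact hn ((hsupp z hz hadj2 ▸ hadj2).symm)
    · exfalso; exact hnadj (hz ▸ hadj2).symm
    · exact hz
    · exact absurd (hz ▸ hadj2) G.irrefl
  have hreachbase : ∀ z (hz : z ∈ s), (G.induce s).Reachable ⟨z, hz⟩ ⟨u, hus⟩ := by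
    have hcu : (G.induce s).Reachable ⟨c, hcs⟩ ⟨u, hus⟩ :=
      (reach_in_induce W (fun y hy => Or.inl hy) hus hcs).symm
    have hw1u : (G.induce s).Reachable ⟨w1, hw1s⟩ ⟨u, hus⟩ :=
      ((induce_adj (s := s) (a := ⟨c, hcs⟩) (b := ⟨w1, hw1s⟩) hc).reachable).symm.trans hcu
    have hxu : (G.induce s).Reachable ⟨x, hxs⟩ ⟨u, hus⟩ :=
      ((induce_adj (s := s) (a := ⟨x, hxs⟩) (b := ⟨w1, hw1s⟩) hxw1).reachable).trans hw1u
    have hw2u : (G.induce s).Reachable ⟨w2, hw2s⟩ ⟨u, hus⟩ :=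
      ((induce_adj (s := s) (a := ⟨x, hxs⟩) (b := ⟨w2, hw2s⟩) hxw2).reachable).symm.trans hxu
    intro z hz
    rcases hz with hz | hz | hz | hz
    · exact (reach_in_induce (W.takeUntil z hz)
        (fun y hy => Or.inl (W.support_takeUntil_subset hz hy)) hus (Or.inl hz)).symm
    · subst hz; exact hw1u
    · subst hz; exact hxu
    · subst hz; exact hw2u
  have hconn := connected_base (G := G) hus hreachbase
  have hmast := master hDH hconn hw2s hxs hus huniq (by
    intro hh; rw [hh] at hw2; rw [SimpleGraph.dist_self] at hw2; omega)
  rw [SimpleGraph.dist_comm (u := x), SimpleGraph.dist_comm (u := w2), hx, hw2] at hmast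
  omega

/-- every vertex at distance `j+1` has a neighbour at distance `j` -/
lemma exists_down {u a : Ω} {j : ℕ} (h : G.dist u a = j + 1) :
    ∃ c, G.Adj c a ∧ G.dist u c = j := by
  have hr : G.Reachable u a := reach_of_dist (by omega)
  obtain ⟨W, hW⟩ := hr.exists_walk_length_eq_dist
  cases hWr : W.reverse with
  | nil =>
    exfalso
    have : W.length = 0 := by
      have := congrArg SimpleGraph.Walk.length hWr
      rwa [SimpleGraph.Walk.length_reverse] at this
    omega
  | cons hadj W' =>
    rename_i z
    refine ⟨z, hadj.symm, ?_⟩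
    have h1 : G.dist u z ≤ j := by
      have hl : W'.length = j := by
        have := congrArg SimpleGraph.Walk.length hWr
        rw [SimpleGraph.Walk.length_reverse] at this
        simp only [SimpleGraph.Walk.length_cons] at this
        omega
      have := G.dist_le W'.reverse
      rw [SimpleGraph.Walk.length_reverse, hl] at this
      exact this
    have h2 : G.dist u a ≤ G.dist u z + 1 := adj_dist_succ hadj.symm ⟨W'.reverse⟩
    omega


lemma conn4 {a b c d : Ω} (hab : G.Adj a b) (hbc : G.Adj b c) (hcd : G.Adj c d) :
    (G.induce {z : Ω | z = a ∨ z = b ∨ z = c ∨ z = d}).Connected := by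
  set s : Set Ω := {z : Ω | z = a ∨ z = b ∨ z = c ∨ z = d} with hs
  have ha : a ∈ s := Or.inl rfl
  have hb : b ∈ s := Or.inr (Or.inl rfl)
  have hc : c ∈ s := Or.inr (Or.inr (Or.inl rfl))
  have hd : d ∈ s := Or.inr (Or.inr (Or.inr rfl))
  have h1 : (G.induce s).Reachable ⟨b, hb⟩ ⟨a, ha⟩ :=
    (induce_adj (s := s) (a := ⟨a, ha⟩) (b := ⟨b, hb⟩) hab).reachable.symm
  have h2 : (G.induce s).Reachable ⟨c, hc⟩ ⟨a, ha⟩ :=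
    (induce_adj (s := s) (a := ⟨b, hb⟩) (b := ⟨c, hc⟩) hbc).reachable.symm.trans h1
  have h3 : (G.induce s).Reachable ⟨d, hd⟩ ⟨a, ha⟩ :=
    (induce_adj (s := s) (a := ⟨c, hc⟩) (b := ⟨d, hd⟩) hcd).reachable.symm.trans h2
  refine connected_base ha ?_
  intro z hz
  rcases hz with rfl | rfl | rfl | rfl
  exacts [SimpleGraph.Reachable.refl _, h1, h2, h3]

lemma conn5 {a b c d e : Ω} (hab : G.Adj a b) (hbc : G.Adj b c) (hcd : G.Adj c d)
    (hde : G.Adj d e) :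
    (G.induce {z : Ω | z = a ∨ z = b ∨ z = c ∨ z = d ∨ z = e}).Connected := by
  set s : Set Ω := {z : Ω | z = a ∨ z = b ∨ z = c ∨ z = d ∨ z = e} with hs
  have ha : a ∈ s := Or.inl rfl
  have hb : b ∈ s := Or.inr (Or.inl rfl)
  have hc : c ∈ s := Or.inr (Or.inr (Or.inl rfl))
  have hd : d ∈ s := Or.inr (Or.inr (Or.inr (Or.inl rfl)))
  have he : e ∈ s := Or.inr (Or.inr (Or.inr (Or.inr rfl)))
  have h1 : (G.induce s).Reachable ⟨b, hb⟩ ⟨a, ha⟩ :=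
    (induce_adj (s := s) (a := ⟨a, ha⟩) (b := ⟨b, hb⟩) hab).reachable.symm
  have h2 : (G.induce s).Reachable ⟨c, hc⟩ ⟨a, ha⟩ :=
    (induce_adj (s := s) (a := ⟨b, hb⟩) (b := ⟨c, hc⟩) hbc).reachable.symm.trans h1
  have h3 : (G.induce s).Reachable ⟨d, hd⟩ ⟨a, ha⟩ :=
    (induce_adj (s := s) (a := ⟨c, hc⟩) (b := ⟨d, hd⟩) hcd).reachable.symm.trans h2
  have h4 : (G.induce s).Reachable ⟨e, he⟩ ⟨a, ha⟩ :=
    (induce_adj (s := s) (a := ⟨d, hd⟩) (b := ⟨e, he⟩) hde).reachable.symm.trans h3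
  refine connected_base ha ?_
  intro z hz
  rcases hz with rfl | rfl | rfl | rfl | rfl
  exacts [SimpleGraph.Reachable.refl _, h1, h2, h3, h4]

/-- no induced P4 whose ends are at distance ≤ 2 -/
lemma p4_dist (hDH : DistanceHereditary G) {a b c d : Ω}
    (hab : G.Adj a b) (hbc : G.Adj b c) (hcd : G.Adj c d)
    (hac : ¬G.Adj a c) (had : ¬G.Adj a d) (hbd : ¬G.Adj b d)
    (hdist : G.dist a d ≤ 2) : False := by
  have hnad : a ≠ d := by
    rintro rfl; exact hac hcd.symm
  have hnbd : b ≠ d := by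
    rintro rfl; exact had hab
  set s : Set Ω := {z : Ω | z = a ∨ z = b ∨ z = c ∨ z = d} with hs
  have ha : a ∈ s := Or.inl rfl
  have hb : b ∈ s := Or.inr (Or.inl rfl)
  have hd : d ∈ s := Or.inr (Or.inr (Or.inr rfl))
  have huniq : ∀ z ∈ s, G.Adj a z → z = b := by
    intro z hz hadj
    rcases hz with rfl | rfl | rfl | rfl
    · exact absurd hadj G.irrefl
    · rfl
    · exact absurd hadj hac
    · exact absurd hadj had
  have hm := master hDH (conn4 hab hbc hcd) ha hb hd huniq hnad
  have h2 : 2 ≤ G.dist b d :=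
    two_le_dist (hbc.reachable.trans hcd.reachable) hnbd hbd
  omega

/-- both vertices of an edge whose one end is at the same dist share lower nbrs -/
lemma down_iff (hDH : DistanceHereditary G) {u x a b c : Ω} {k : ℕ} (hk : 2 ≤ k)
    (hx : G.dist u x = k) (ha : G.dist u a = k - 1) (hb : G.dist u b = k - 1)
    (hxa : G.Adj x a) (hxb : G.Adj x b)
    (hc : G.Adj c a) (hcl : G.dist u c = k - 2) : G.Adj c b := by
  by_cases hab : a = b
  · exact hab ▸ hc
  by_cases hk2 : k = 2
  · subst hk2
    have hrc : G.Reachable u c := (reach_of_dist (by omega : G.dist u a ≠ 0)).trans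
      hc.symm.reachable
    have hcu : u = c := hrc.dist_eq_zero_iff.mp (by omega)
    rw [← hcu]
    exact SimpleGraph.dist_eq_one_iff_adj.mp (by omega)
  · have hk3 : 3 ≤ k := by omega
    by_cases hadj : G.Adj a b
    · exact same_down hDH (by omega : 2 ≤ k - 1) ha hb hadj hc (by
        have : k - 1 - 1 = k - 2 := by omega
        rw [this]; exact hcl)
    · refine same_down_top hDH (by omega : 2 ≤ k - 1) ha hb ?_ hxa hxb hadj hc (by
        have : k - 1 - 1 = k - 2 := by omega
        rw [this]; exact hcl)
      rw [hx]; omega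



def P4Free (G : SimpleGraph Ω) (s : Finset Ω) : Prop :=
  ∀ a b c d : Ω, a ∈ s → b ∈ s → c ∈ s → d ∈ s →
    G.Adj a b → G.Adj b c → G.Adj c d → ¬G.Adj a c → ¬G.Adj a d → ¬G.Adj b d → False

def TwinPair (G : SimpleGraph Ω) (s : Finset Ω) : Prop :=
  ∃ a ∈ s, ∃ b ∈ s, a ≠ b ∧ ∀ γ ∈ s, γ ≠ a → γ ≠ b → (G.Adj γ a ↔ G.Adj γ b)

def Split (G : SimpleGraph Ω) (s : Finset Ω) : Prop :=
  ∃ A : Finset Ω, A ⊆ s ∧ A.Nonempty ∧ ¬(s ⊆ A) ∧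
    ∀ a ∈ A, ∀ b ∈ s, b ∉ A → ¬G.Adj a b

lemma P4Free.mono {G : SimpleGraph Ω} {s t : Finset Ω} (h : P4Free G s) (hts : t ⊆ s) :
    P4Free G t := fun a b c d ha hb hc hd => h a b c d (hts ha) (hts hb) (hts hc) (hts hd)

lemma P4Free.compl {G : SimpleGraph Ω} {s : Finset Ω} (h : P4Free G s) : P4Free Gᶜ s := by
  intro a b c d ha hb hc hd hab hbc hcd hac had hbd
  rw [SimpleGraph.compl_adj] at hab hbc hcd
  have hac' : a ≠ c := by
    rintro rfl; exact had ((SimpleGraph.compl_adj _ _ _).mpr ⟨hcd.1, hcd.2⟩)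
  have had' : a ≠ d := by
    rintro rfl; exact hac ((SimpleGraph.compl_adj _ _ _).mpr ⟨hcd.1.symm, fun hh => hcd.2 hh.symm⟩)
  have hbd' : b ≠ d := by
    rintro rfl; exact had ((SimpleGraph.compl_adj _ _ _).mpr ⟨hab.1, hab.2⟩)
  simp only [SimpleGraph.compl_adj, not_and, not_not] at hac had hbd
  exact h c a d b hc ha hd hb (hac hac').symm (had had') ((hbd hbd').symm)
    hcd.2 (fun hh => hbc.2 hh.symm) hab.2

/-- chain relation within a finset -/
def chainRel (G : SimpleGraph Ω) (s : Finset Ω) : Ω → Ω → Prop :=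
  fun x y => G.Adj x y ∧ x ∈ s ∧ y ∈ s

lemma chainRel_symm {G : SimpleGraph Ω} {s : Finset Ω} : Symmetric (chainRel G s) :=
  fun _ _ h => ⟨h.1.symm, h.2.2, h.2.1⟩

lemma chain_symm {G : SimpleGraph Ω} {s : Finset Ω} {p q : Ω}
    (h : Relation.ReflTransGen (chainRel G s) p q) :
    Relation.ReflTransGen (chainRel G s) q p :=
  by haveI : Std.Symm (chainRel G s) := ⟨fun a b h => chainRel_symm h⟩; exact Std.Symm.symm _ _ h

lemma conn_of_not_split {G : SimpleGraph Ω} {s : Finset Ω} (h : ¬ Split G s) :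
    ∀ p ∈ s, ∀ q ∈ s, Relation.ReflTransGen (chainRel G s) p q := by
  classical
  intro p hp q hq
  by_contra hn
  apply h
  refine ⟨s.filter (fun z => Relation.ReflTransGen (chainRel G s) p z),
    Finset.filter_subset _ _, ⟨p, Finset.mem_filter.mpr ⟨hp, Relation.ReflTransGen.refl⟩⟩, ?_, ?_⟩
  · intro hsub
    have := hsub hq
    simp only [Finset.mem_filter] at this
    exact hn this.2
  · intro a ha b hb hbn hadj
    simp only [Finset.mem_filter] at ha hbn
    exact (hbn ⟨hb, ha.2.trans (Relation.ReflTransGen.single ⟨hadj, ha.1, hb⟩)⟩)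

lemma cross {r : Ω → Ω → Prop} {X : Ω → Prop} {p q : Ω}
    (h : Relation.ReflTransGen r p q) (hp : X p) (hq : ¬ X q) :
    ∃ x y, Relation.ReflTransGen r p x ∧ r x y ∧ X x ∧ ¬ X y := by
  induction h with
  | refl => exact absurd hp hq
  | @tail b c hpb hbc ih =>
    by_cases hXb : X b
    · exact ⟨b, c, hpb, hbc, hXb, hq⟩
    · obtain ⟨x, y, h1, h2, h3, h4⟩ := ih hXb
      exact ⟨x, y, h1, h2, h3, h4⟩


variable [DecidableEq Ω]

lemma sein_aux {G : SimpleGraph Ω} {s : Finset Ω} {v w : Ω} (hP4 : P4Free G s) (hv : v ∈ s)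
    (P : Finset Ω) (hPs : P ⊆ s.erase v) (hw : w ∈ P) (hnadj : ¬ G.Adj v w)
    (hedge : ∀ a ∈ P, ∀ b ∈ s.erase v, b ∉ P → ¬ G.Adj a b)
    (hQne : ∃ b ∈ s.erase v, b ∉ P)
    (hns : ¬ Split G s) : False := by
  classical
  have hconn := conn_of_not_split hns
  set s' := s.erase v with hs'
  set Astar : Ω → Prop := fun z => Relation.ReflTransGen (chainRel G s') w z with hAstar
  have hAstarP : ∀ z, Astar z → z ∈ P := by
    intro z hz
    induction hz with
    | refl => exact hw
    | @tail y z hwy hyz ih =>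
      by_contra hzP
      exact hedge y ih z hyz.2.2 hzP hyz.1
  have hp1 : ∃ p1, Astar p1 ∧ G.Adj v p1 := by
    by_contra hno
    push_neg at hno
    apply hns
    refine ⟨s'.filter Astar, (Finset.filter_subset _ _).trans (Finset.erase_subset _ _),
      ⟨w, Finset.mem_filter.mpr ⟨hPs hw, Relation.ReflTransGen.refl⟩⟩, ?_, ?_⟩
    · intro hsub
      have := hsub hv
      simp only [Finset.mem_filter, hs', Finset.mem_erase] at this
      exact this.1.1 rfl
    · intro a ha b hb hbn hadj
      simp only [Finset.mem_filter] at ha hbn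
      by_cases hbv : b = v
      · subst hbv; exact hno a ha.2 hadj.symm
      · exact hbn ⟨Finset.mem_erase.mpr ⟨hbv, hb⟩,
          ha.2.tail ⟨hadj, ha.1, Finset.mem_erase.mpr ⟨hbv, hb⟩⟩⟩
  obtain ⟨p1, hp1A, hp1adj⟩ := hp1
  obtain ⟨x, y, hchain, hstep, hvx, hvy⟩ :=
    cross (X := fun z => G.Adj v z) (chain_symm hp1A) hp1adj hnadj
  have hxA : Astar x := hp1A.trans hchain
  have hyA : Astar y := hxA.tail hstep
  obtain ⟨q0, hq0s, hq0P⟩ := hQne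
  obtain ⟨x2, y2, _, hstep2, hX2, hY2⟩ :=
    cross (X := fun z => z ∈ P ∨ z = v)
      (hconn w (Finset.mem_of_mem_erase (hPs hw)) q0 (Finset.mem_of_mem_erase hq0s))
      (Or.inl hw) (by
        rintro (h | h)
        · exact hq0P h
        · exact (Finset.mem_erase.mp hq0s).1 h)
  push_neg at hY2
  have hy2s' : y2 ∈ s' := Finset.mem_erase.mpr ⟨hY2.2, hstep2.2.2⟩
  have hx2v : x2 = v := by
    rcases hX2 with h | h
    · exact absurd hstep2.1 (hedge x2 h y2 hy2s' hY2.1)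
    · exact h
  have hvzB : G.Adj v y2 := hx2v ▸ hstep2.1
  -- induced P4 : y2 - v - x - y
  refine hP4 y2 v x y (Finset.mem_of_mem_erase hy2s') hv
    (Finset.mem_of_mem_erase (hPs (hAstarP x hxA)))
    (Finset.mem_of_mem_erase (hPs (hAstarP y hyA)))
    hvzB.symm hvx hstep.1 ?_ ?_ hvy
  · intro hh
    exact hedge x (hAstarP x hxA) y2 hy2s' hY2.1 hh.symm
  · intro hh
    exact hedge y (hAstarP y hyA) y2 hy2s' hY2.1 hh.symm

lemma sein_step {G : SimpleGraph Ω} {s : Finset Ω} {v : Ω} (hP4 : P4Free G s) (hv : v ∈ s)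
    (hsplit : Split G (s.erase v)) (hns : ¬ Split G s) : ∀ w ∈ s.erase v, G.Adj v w := by
  classical
  obtain ⟨A, hAsub, hAne, hAnsub, hedge⟩ := hsplit
  intro w hw
  by_contra hnadj
  by_cases hwA : w ∈ A
  · refine sein_aux hP4 hv A hAsub hwA hnadj hedge ?_ hns
    by_contra hno
    push_neg at hno
    exact hAnsub (fun b hb => hno b hb)
  · refine sein_aux hP4 hv (s.erase v \ A) (Finset.sdiff_subset) 
      (Finset.mem_sdiff.mpr ⟨hw, hwA⟩) hnadj ?_ ?_ hns
    · intro a ha b hb hbn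
      have hbA : b ∈ A := by
        by_contra hbA
        exact hbn (Finset.mem_sdiff.mpr ⟨hb, hbA⟩)
      have := hedge b hbA a (Finset.mem_sdiff.mp ha).1 (Finset.mem_sdiff.mp ha).2
      exact fun hh => this hh.symm
    · obtain ⟨a, ha⟩ := hAne
      exact ⟨a, hAsub ha, fun hh => (Finset.mem_sdiff.mp hh).2 ha⟩

lemma sein : ∀ (n : ℕ) (s : Finset Ω) (G : SimpleGraph Ω), s.card ≤ n → P4Free G s →
    2 ≤ s.card → Split G s ∨ Split Gᶜ s := by
  classical
  intro n
  induction n with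
  | zero => intro s G h1 _ h2; omega
  | succ n ih =>
    intro s G hcard hP4 h2
    by_cases hc2 : s.card = 2
    · obtain ⟨a, b, hne, rfl⟩ := Finset.card_eq_two.mp hc2
      by_cases hadj : G.Adj a b
      · refine Or.inr ⟨{a}, by simp, ⟨a, by simp⟩, ?_, ?_⟩
        · intro hsub
          have := hsub (by simp : b ∈ ({a, b} : Finset Ω))
          simp at this
          exact hne this.symm
        · intro x hx y hy hyn
          simp only [Finset.mem_singleton] at hx
          simp only [Finset.mem_insert, Finset.mem_singleton] at hy
          subst hx
          have hyb : y = b := by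
            rcases hy with h | h
            · exact absurd (by simp [h]) hyn
            · exact h
          subst hyb
          simp only [SimpleGraph.compl_adj, not_and, not_not]
          intro _; exact hadj
      · refine Or.inl ⟨{a}, by simp, ⟨a, by simp⟩, ?_, ?_⟩
        · intro hsub
          have := hsub (by simp : b ∈ ({a, b} : Finset Ω))
          simp at this
          exact hne this.symm
        · intro x hx y hy hyn
          simp only [Finset.mem_singleton] at hx
          simp only [Finset.mem_insert, Finset.mem_singleton] at hy
          subst hx
          have hyb : y = b := by
            rcases hy with h | h
            · exact absurd (by simp [h]) hyn
            · exact h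
          subst hyb
          exact hadj
    · -- card ≥ 3
      have h3 : 3 ≤ s.card := by omega
      obtain ⟨v, hv⟩ := Finset.card_pos.mp (by omega : 0 < s.card)
      have hcard' : (s.erase v).card = s.card - 1 := Finset.card_erase_of_mem hv
      have hne2 : ∃ w ∈ s, w ≠ v := by
        by_contra hno
        push_neg at hno
        have : s ⊆ {v} := fun z hz => Finset.mem_singleton.mpr (hno z hz)
        have := Finset.card_le_card this
        simp at this
        omega
      rcases ih (s.erase v) G (by omega) (hP4.mono (Finset.erase_subset _ _)) (by omega) with
        hsp | hsp
      · by_cases hns : Split G s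
        · exact Or.inl hns
        · have huniv := sein_step hP4 hv hsp hns
          refine Or.inr ⟨{v}, by simp [hv], ⟨v, by simp⟩, ?_, ?_⟩
          · intro hsub
            obtain ⟨w, hw, hwv⟩ := hne2
            have := hsub hw
            simp at this
            exact hwv this
          · intro a ha b hb hbn
            simp only [Finset.mem_singleton] at ha hbn
            subst ha
            simp only [SimpleGraph.compl_adj, not_and, not_not]
            intro _
            exact huniv b (Finset.mem_erase.mpr ⟨fun hh => hbn hh, hb⟩)
      · by_cases hns : Split Gᶜ s
        · exact Or.inr hns
        · have hsp' : Split Gᶜ (s.erase v) := hsp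
          have huniv := sein_step (G := Gᶜ) hP4.compl hv hsp' hns
          refine Or.inl ⟨{v}, by simp [hv], ⟨v, by simp⟩, ?_, ?_⟩
          · intro hsub
            obtain ⟨w, hw, hwv⟩ := hne2
            have := hsub hw
            simp at this
            exact hwv this
          · intro a ha b hb hbn
            simp only [Finset.mem_singleton] at ha hbn
            subst ha
            have := huniv b (Finset.mem_erase.mpr ⟨fun hh => hbn hh, hb⟩)
            rw [SimpleGraph.compl_adj] at this
            exact this.2


lemma TwinPair.of_compl {G : SimpleGraph Ω} {s : Finset Ω} (h : TwinPair Gᶜ s) :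
    TwinPair G s := by
  obtain ⟨a, ha, b, hb, hne, htw⟩ := h
  refine ⟨a, ha, b, hb, hne, fun γ hγ hga hgb => ?_⟩
  have := htw γ hγ hga hgb
  simp only [SimpleGraph.compl_adj, ne_eq, hga, hgb, not_false_eq_true, true_and] at this
  exact not_iff_not.mp this

lemma twins_of_split {G : SimpleGraph Ω} {s : Finset Ω}
    (hImp : ∀ (t : Finset Ω) (H : SimpleGraph Ω), t.card < s.card → P4Free H t →
      2 ≤ t.card → TwinPair H t)
    (hP4 : P4Free G s) (h3 : 3 ≤ s.card) (hsp : Split G s) : TwinPair G s := by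
  classical
  obtain ⟨A, hsub, hAne, hnsub, hedge⟩ := hsp
  have hAlt : A.card < s.card := Finset.card_lt_card ⟨hsub, hnsub⟩
  by_cases hA2 : 2 ≤ A.card
  · obtain ⟨a, ha, b, hb, hne, htw⟩ := hImp A G hAlt (hP4.mono hsub) hA2
    refine ⟨a, hsub ha, b, hsub hb, hne, fun γ hγ hga hgb => ?_⟩
    by_cases hγA : γ ∈ A
    · exact htw γ hγA hga hgb
    · exact iff_of_false (fun hh => hedge a ha γ hγ hγA hh.symm)
        (fun hh => hedge b hb γ hγ hγA hh.symm)
  · set B := s \ A with hB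
    have hBcard : B.card = s.card - A.card := Finset.card_sdiff_of_subset hsub
    have hA1 : A.card = 1 := by
      obtain ⟨x, hx⟩ := hAne
      have := Finset.card_pos.mpr ⟨x, hx⟩
      omega
    have hB2 : 2 ≤ B.card := by omega
    have hBlt : B.card < s.card := by omega
    obtain ⟨a, ha, b, hb, hne, htw⟩ := hImp B G hBlt (hP4.mono Finset.sdiff_subset) hB2
    refine ⟨a, Finset.sdiff_subset ha, b, Finset.sdiff_subset hb, hne,
      fun γ hγ hga hgb => ?_⟩
    by_cases hγB : γ ∈ B
    · exact htw γ hγB hga hgb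
    · have hγA : γ ∈ A := by
        by_contra hh
        exact hγB (Finset.mem_sdiff.mpr ⟨hγ, hh⟩)
      exact iff_of_false
        (hedge γ hγA a (Finset.sdiff_subset ha) (Finset.mem_sdiff.mp ha).2)
        (hedge γ hγA b (Finset.sdiff_subset hb) (Finset.mem_sdiff.mp hb).2)

lemma cograph_twins : ∀ (n : ℕ) (s : Finset Ω) (G : SimpleGraph Ω), s.card ≤ n →
    P4Free G s → 2 ≤ s.card → TwinPair G s := by
  classical
  intro n
  induction n with
  | zero => intro s G h1 _ h2; omega
  | succ n ih =>
    intro s G hn hP4 h2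
    by_cases hc3 : 3 ≤ s.card
    · have hImp : ∀ (t : Finset Ω) (H : SimpleGraph Ω), t.card < s.card → P4Free H t →
          2 ≤ t.card → TwinPair H t := by
        intro t H hlt hp ht2
        exact ih t H (by omega) hp ht2
      rcases sein s.card s G le_rfl hP4 h2 with hsp | hsp
      · exact twins_of_split hImp hP4 hc3 hsp
      · exact TwinPair.of_compl (twins_of_split hImp hP4.compl hc3 hsp)
    · have hc2 : s.card = 2 := by omega
      obtain ⟨a, b, hne, rfl⟩ := Finset.card_eq_two.mp hc2
      refine ⟨a, by simp, b, by simp, hne, fun γ hγ hga hgb => ?_⟩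
      simp only [Finset.mem_insert, Finset.mem_singleton] at hγ
      rcases hγ with h | h
      · exact absurd h hga
      · exact absurd h hgb



variable [Fintype Ω]

lemma caseI (hDH : DistanceHereditary G) {u : Ω} {k : ℕ} (hk2 : 2 ≤ k)
    (hmax : ∀ w, G.dist u w ≤ k) {y z : Ω} (hy : G.dist u y = k) (hz : G.dist u z = k)
    (hyz : G.Adj y z) :
    ∃ a b : Ω, a ≠ b ∧ ∀ γ, γ ≠ a → γ ≠ b → (G.Adj γ a ↔ G.Adj γ b) := by
  classical
  set r : Ω → Ω → Prop := fun a b => G.Adj a b ∧ G.dist u a = k ∧ G.dist u b = k with hr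
  have hCk : ∀ c, Relation.ReflTransGen r y c → G.dist u c = k := by
    intro c hrtg
    induction hrtg with
    | refl => exact hy
    | tail _ hstep _ => exact hstep.2.2
  have key : ∀ c, Relation.ReflTransGen r y c → ∀ w, G.dist u w = k - 1 →
      (G.Adj w c ↔ G.Adj w y) := by
    intro c hrtg
    induction hrtg with
    | refl => intro w _; exact Iff.rfl
    | @tail b c hyb hstep ih =>
      intro w hw
      constructor
      · intro h
        exact (ih w hw).mp (same_down hDH hk2 hstep.2.2 hstep.2.1 hstep.1.symm h (by
          rw [hw]))
      · intro h
        exact same_down hDH hk2 hstep.2.1 hstep.2.2 hstep.1 ((ih w hw).mpr h) (by rw [hw])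
  set C : Finset Ω := Finset.univ.filter (fun c => Relation.ReflTransGen r y c) with hC
  have hmemC : ∀ c, c ∈ C ↔ Relation.ReflTransGen r y c := by
    intro c; simp [hC]
  have hyC : y ∈ C := (hmemC y).mpr Relation.ReflTransGen.refl
  have hzC : z ∈ C := (hmemC z).mpr (Relation.ReflTransGen.single ⟨hyz, hy, hz⟩)
  have hP4C : P4Free G C := by
    intro a b c d ha hb hc hd hab hbc hcd hac had hbd
    have hak : G.dist u a = k := hCk a ((hmemC a).mp ha)
    obtain ⟨w, hwadj, hwl⟩ := exists_down (u := u) (a := a) (j := k - 1) (by rw [hak]; omega)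
    have hwd : G.Adj w d := (key d ((hmemC d).mp hd) w hwl).mpr
      ((key a ((hmemC a).mp ha) w hwl).mp hwadj)
    exact p4_dist hDH hab hbc hcd hac had hbd (dist_le_two hwadj.symm hwd)
  have hcard : 2 ≤ C.card := by
    rw [(by norm_num : (2 : ℕ) = 1 + 1)]
    exact Finset.one_lt_card.mpr ⟨y, hyC, z, hzC, hyz.ne⟩
  obtain ⟨a, haC, b, hbC, hne, htw⟩ := cograph_twins C.card C G le_rfl hP4C hcard
  have haRT := (hmemC a).mp haC
  have hbRT := (hmemC b).mp hbC
  have hak : G.dist u a = k := hCk a haRT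
  have hbk : G.dist u b = k := hCk b hbRT
  refine ⟨a, b, hne, fun γ hga hgb => ?_⟩
  by_cases hγC : γ ∈ C
  · exact htw γ hγC hga hgb
  by_cases hreach : G.Reachable u γ
  · by_cases hj : G.dist u γ = k - 1
    · exact (key a haRT γ hj).trans (key b hbRT γ hj).symm
    · refine iff_of_false ?_ ?_
      · intro h
        have h1 : G.dist u a ≤ G.dist u γ + 1 := adj_dist_succ h hreach
        have h2 : G.dist u γ ≤ G.dist u a + 1 :=
          adj_dist_succ h.symm (reach_of_dist (by omega))
        have h3 : G.dist u γ ≤ k := hmax γ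
        have hjk : G.dist u γ = k := by omega
        exact hγC ((hmemC γ).mpr (haRT.tail ⟨h.symm, hak, hjk⟩))
      · intro h
        have h1 : G.dist u b ≤ G.dist u γ + 1 := adj_dist_succ h hreach
        have h2 : G.dist u γ ≤ G.dist u b + 1 :=
          adj_dist_succ h.symm (reach_of_dist (by omega))
        have h3 : G.dist u γ ≤ k := hmax γ
        have hjk : G.dist u γ = k := by omega
        exact hγC ((hmemC γ).mpr (hbRT.tail ⟨h.symm, hbk, hjk⟩))
  · refine iff_of_false ?_ ?_
    · intro h
      exact hreach ((reach_of_dist (u := u) (a := a) (by omega)).trans h.symm.reachable)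
    · intro h
      exact hreach ((reach_of_dist (u := u) (a := b) (by omega)).trans h.symm.reachable)

lemma caseII (hDH : DistanceHereditary G) {u : Ω} {k : ℕ} (hk2 : 2 ≤ k)
    (hmax : ∀ w, G.dist u w ≤ k)
    (htop : ∀ y z, G.dist u y = k → G.dist u z = k → ¬G.Adj y z)
    {x0 : Ω} (hx0 : G.dist u x0 = k)
    (hnp : ∀ v : Ω, ¬∃! b : Ω, G.Adj v b) :
    ∃ a b : Ω, a ≠ b ∧ ∀ γ, γ ≠ a → γ ≠ b → (G.Adj γ a ↔ G.Adj γ b) := by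
  classical
  -- the level of any neighbour of a top vertex is k-1
  have hlev : ∀ x' a', G.dist u x' = k → G.Adj x' a' → G.dist u a' = k - 1 := by
    intro x' a' hx' hadj
    have hr : G.Reachable u x' := reach_of_dist (by omega)
    have hra : G.Reachable u a' := reach_adj hr hadj
    have h1 : G.dist u a' ≤ k := hmax a'
    have h2 : G.dist u x' ≤ G.dist u a' + 1 := adj_dist_succ hadj.symm hra
    have h3 : G.dist u a' ≠ k := fun hh => htop x' a' hx' hh hadj
    omega
  -- shared lower neighbourhood of the neighbourhood of a top vertex
  have hdownT : ∀ x' a' b' c, G.dist u x' = k → G.Adj x' a' → G.Adj x' b' →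
      G.Adj c a' → G.dist u c = k - 2 → G.Adj c b' := by
    intro x' a' b' c hx' ha' hb' hc hcl
    exact down_iff hDH hk2 hx' (hlev _ _ hx' ha') (hlev _ _ hx' hb') ha' hb' hc hcl
  -- choose the top vertex with minimal degree
  set T : Finset Ω := Finset.univ.filter (fun v => G.dist u v = k) with hT
  set deg : Ω → ℕ := fun v => (Finset.univ.filter (fun w => G.Adj v w)).card with hdeg
  obtain ⟨x, hxT, hxmin⟩ := Finset.exists_min_image T deg ⟨x0, by simp [hT, hx0]⟩
  have hx : G.dist u x = k := by
    have := hxT; simp [hT] at this; exact this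
  have hrx : G.Reachable u x := reach_of_dist (by omega)
  set D : Finset Ω := Finset.univ.filter (fun w => G.Adj x w) with hD
  have hmemD : ∀ w, w ∈ D ↔ G.Adj x w := by intro w; simp [hD]
  have hDdeg : D.card = deg x := rfl
  -- D has at least two elements
  obtain ⟨c0, hc0, hc0l⟩ := exists_down (u := u) (a := x) (j := k - 1) (by rw [hx]; omega)
  have hc0D : c0 ∈ D := (hmemD c0).mpr hc0.symm
  obtain ⟨c1, hc1, hc1ne⟩ : ∃ c1, G.Adj x c1 ∧ c1 ≠ c0 := by
    by_contra hno
    push_neg at hno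
    exact hnp x ⟨c0, hc0.symm, fun b hb => hno b hb⟩
  have hc1D : c1 ∈ D := (hmemD c1).mpr hc1
  have hcardD : 2 ≤ D.card := by
    rw [(by norm_num : (2 : ℕ) = 1 + 1)]
    exact Finset.one_lt_card.mpr ⟨c1, hc1D, c0, hc0D, hc1ne⟩
  -- D is P4-free
  have hP4D : P4Free G D := by
    intro a b c d ha hb hc hd hab hbc hcd hac had hbd
    exact p4_dist hDH hab hbc hcd hac had hbd
      (dist_le_two ((hmemD a).mp ha).symm ((hmemD d).mp hd))
  obtain ⟨a, haD, b, hbD, hne, htw⟩ := cograph_twins D.card D G le_rfl hP4D hcardD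
  refine ⟨a, b, hne, fun γ hga hgb => ?_⟩
  by_cases hγx : γ = x
  · subst hγx
    exact iff_of_true ((hmemD a).mp haD) ((hmemD b).mp hbD)
  by_cases hγD : γ ∈ D
  · exact htw γ hγD hga hgb
  -- γ outside D ∪ {x} : show that γ cannot distinguish any two vertices of D
  have kill : ∀ a' b', a' ∈ D → b' ∈ D → G.Adj γ a' → ¬G.Adj γ b' → False := by
    intro a' b' ha'D hb'D hadj hnadj
    have hxa' : G.Adj x a' := (hmemD a').mp ha'D
    have hxb' : G.Adj x b' := (hmemD b').mp hb'D
    have hla' : G.dist u a' = k - 1 := hlev x a' hx hxa'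
    have hlb' : G.dist u b' = k - 1 := hlev x b' hx hxb'
    have hra' : G.Reachable u a' := reach_of_dist (by omega)
    have hrb' : G.Reachable u b' := reach_of_dist (by omega)
    have hrγ : G.Reachable u γ := hra'.trans hadj.symm.reachable
    have hjle : G.dist u γ ≤ k := hmax γ
    have hjge : k - 1 ≤ G.dist u γ + 1 := by
      have h := adj_dist_succ hadj hrγ
      omega
    have hnγx : ¬G.Adj x γ := fun hh => hγD ((hmemD γ).mpr hh)
    have hnγb' : b' ≠ γ := by
      rintro rfl; exact hγD hb'D
    have hnγa' : a' ≠ γ := by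
      rintro rfl; exact hγD ha'D
    have hrbγ : G.Reachable b' γ := hrb'.symm.trans hrγ
    -- get a common lower neighbour c of a' (hence of b')
    obtain ⟨c, hc, hcl⟩ := exists_down (u := u) (a := a') (j := k - 2)
      (by rw [hla']; omega)
    have hcb' : G.Adj c b' := hdownT x a' b' c hx hxa' hxb' hc hcl
    have hncx : ¬G.Adj c x := by
      intro hh
      have := adj_dist_succ hh (hra'.trans hc.symm.reachable)
      omega
    rcases (by omega : G.dist u γ = k - 2 ∨ G.dist u γ = k - 1 ∨ G.dist u γ = k) with
      hj | hj | hj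
    · -- γ is a lower neighbour of a', hence of b'
      exact hnadj (hdownT x a' b' γ hx hxa' hxb' hadj hj)
    · -- γ at level k-1
      have hcγ : G.Adj c γ := by
        by_cases hk2' : k = 2
        · have hrc : G.Reachable u c := hra'.trans hc.symm.reachable
          have hcu : u = c := hrc.dist_eq_zero_iff.mp (by omega)
          rw [← hcu]
          exact SimpleGraph.dist_eq_one_iff_adj.mp (by rw [hj]; omega)
        · exact same_down hDH (by omega : 2 ≤ k - 1) hla' hj hadj.symm hc
            (by rw [hcl]; omega)
      have hncγ : ¬G.Adj c γ → False := fun hh => hh hcγ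
      -- master on {γ, c, b', x}
      set s : Set Ω := {w : Ω | w = γ ∨ w = c ∨ w = b' ∨ w = x} with hs
      have hγs : γ ∈ s := Or.inl rfl
      have hbs : b' ∈ s := Or.inr (Or.inr (Or.inl rfl))
      have hxs : x ∈ s := Or.inr (Or.inr (Or.inr rfl))
      have huniq : ∀ w ∈ s, G.Adj x w → w = b' := by
        intro w hw hadjw
        rcases hw with rfl | rfl | rfl | rfl
        · exact absurd hadjw hnγx
        · exact absurd hadjw (fun hh => hncx hh.symm)
        · rfl
        · exact absurd hadjw G.irrefl
      have hconn := conn4 (a := γ) (b := c) (c := b') (d := x) hcγ.symm hcb' hxb'.symm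
      have hm := master hDH hconn hxs hbs hγs huniq (Ne.symm hγx)
      have hd1 : G.dist x γ ≤ 2 := dist_le_two hxa' hadj.symm
      have hd2 : 2 ≤ G.dist b' γ :=
        two_le_dist hrbγ hnγb' (fun hh => hnadj hh.symm)
      omega
    · -- γ at top level : use minimality of deg x
      set Dγ : Finset Ω := Finset.univ.filter (fun w => G.Adj γ w) with hDγ
      have hmemDγ : ∀ w, w ∈ Dγ ↔ G.Adj γ w := by intro w; simp [hDγ]
      have hγT : γ ∈ T := by simp [hT, hj]
      have hmin : D.card ≤ Dγ.card := hxmin γ hγT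
      by_cases hsub : Dγ ⊆ D
      · have hDeq : Dγ = D := Finset.eq_of_subset_of_card_le hsub hmin
        exact hnadj ((hmemDγ b').mp (hDeq ▸ hb'D))
      · obtain ⟨e, heDγ, heD⟩ := Finset.not_subset.mp hsub
        have hγe : G.Adj γ e := (hmemDγ e).mp heDγ
        have hnxe : ¬G.Adj x e := fun hh => heD ((hmemD e).mpr hh)
        have hle' : G.dist u e = k - 1 := hlev γ e hj hγe
        have hce : G.Adj c e := hdownT γ a' e c hj hadj hγe hc hcl
        have hneb' : e ≠ b' := by rintro rfl; exact heD hb'D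
        have hnea' : e ≠ a' := by rintro rfl; exact heD ha'D
        have hnex : e ≠ x := by rintro rfl; omega
        have hnγc : ¬G.Adj γ c := by
          intro hh
          have := adj_dist_succ hh.symm (reach_adj hra' hc.symm)
          omega
        have hrxγ : G.Reachable x γ := hrx.symm.trans hrγ
        have hrbe : G.Reachable b' e := hrb'.symm.trans (reach_of_dist (by omega))
        have hnxee : x ≠ e := hnex.symm
        have hdbe : G.dist b' e ≤ 2 := dist_le_two hcb'.symm hce
        have hdxγ : G.dist x γ ≤ 2 := dist_le_two hxa' hadj.symm
        have hrxe : G.Reachable x e := hrx.symm.trans (reach_of_dist (by omega))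
        by_cases hbe : G.Adj b' e
        · -- P4-ish x - b' - e - γ
          set s : Set Ω := {w : Ω | w = x ∨ w = b' ∨ w = e ∨ w = γ} with hs
          have hxs : x ∈ s := Or.inl rfl
          have hbs : b' ∈ s := Or.inr (Or.inl rfl)
          have hγs : γ ∈ s := Or.inr (Or.inr (Or.inr rfl))
          have huniq : ∀ w ∈ s, G.Adj x w → w = b' := by
            intro w hw hadjw
            rcases hw with rfl | rfl | rfl | rfl
            · exact absurd hadjw G.irrefl
            · rfl
            · exact absurd hadjw hnxe
            · exact absurd hadjw hnγx
          have hconn := conn4 (a := x) (b := b') (c := e) (d := γ) hxb' hbe hγe.symm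
          have hm := master hDH hconn hxs hbs hγs huniq (Ne.symm hγx)
          have hd2 : 2 ≤ G.dist b' γ := two_le_dist hrbγ hnγb' (fun hh => hnadj hh.symm)
          omega
        by_cases hab' : G.Adj a' b'
        · -- γ - e - c - b'
          set s : Set Ω := {w : Ω | w = γ ∨ w = e ∨ w = c ∨ w = b'} with hs
          have hγs : γ ∈ s := Or.inl rfl
          have hes : e ∈ s := Or.inr (Or.inl rfl)
          have hbs : b' ∈ s := Or.inr (Or.inr (Or.inr rfl))
          have huniq : ∀ w ∈ s, G.Adj γ w → w = e := by
            intro w hw hadjw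
            rcases hw with rfl | rfl | rfl | rfl
            · exact absurd hadjw G.irrefl
            · rfl
            · exact absurd hadjw hnγc
            · exact absurd hadjw hnadj
          have hconn := conn4 (a := γ) (b := e) (c := c) (d := b') hγe hce.symm hcb'
          have hm := master hDH hconn hγs hes hbs huniq hnγb'.symm
          have hd1 : G.dist γ b' ≤ 2 := dist_le_two hadj hab'
          have hd2 : 2 ≤ G.dist e b' :=
            two_le_dist hrbe.symm hneb' (fun hh => hbe hh.symm)
          omega
        by_cases hae : G.Adj a' e
        · -- b' - x - a' - e
          set s : Set Ω := {w : Ω | w = b' ∨ w = x ∨ w = a' ∨ w = e} with hs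
          have hbs : b' ∈ s := Or.inl rfl
          have hxs : x ∈ s := Or.inr (Or.inl rfl)
          have hes : e ∈ s := Or.inr (Or.inr (Or.inr rfl))
          have huniq : ∀ w ∈ s, G.Adj b' w → w = x := by
            intro w hw hadjw
            rcases hw with rfl | rfl | rfl | rfl
            · exact absurd hadjw G.irrefl
            · rfl
            · exact absurd hadjw (fun hh => hab' hh.symm)
            · exact absurd hadjw hbe
          have hconn := conn4 (a := b') (b := x) (c := a') (d := e) hxb'.symm hxa' hae
          have hm := master hDH hconn hbs hxs hes huniq hneb'.symm
          have hd2 : 2 ≤ G.dist x e := two_le_dist hrxe hnxee hnxe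
          omega
        · -- b' - x - a' - γ - e
          set s : Set Ω := {w : Ω | w = b' ∨ w = x ∨ w = a' ∨ w = γ ∨ w = e} with hs
          have hbs : b' ∈ s := Or.inl rfl
          have hxs : x ∈ s := Or.inr (Or.inl rfl)
          have hes : e ∈ s := Or.inr (Or.inr (Or.inr (Or.inr rfl)))
          have huniq : ∀ w ∈ s, G.Adj b' w → w = x := by
            intro w hw hadjw
            rcases hw with rfl | rfl | rfl | rfl | rfl
            · exact absurd hadjw G.irrefl
            · rfl
            · exact absurd hadjw (fun hh => hab' hh.symm)
            · exact absurd hadjw (fun hh => hnadj hh.symm)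
            · exact absurd hadjw hbe
          have hconn := conn5 (a := b') (b := x) (c := a') (d := γ) (e := e)
            hxb'.symm hxa' hadj.symm hγe
          have hm := master hDH hconn hbs hxs hes huniq hneb'.symm
          have hd2 : 2 ≤ G.dist x e := two_le_dist hrxe hnxee hnxe
          omega
  constructor
  · intro h
    by_contra hn
    exact kill a b haD hbD h hn
  · intro h
    by_contra hn
    exact kill b a hbD haD h hn

end DHProof

theorem stmt_4' {Ω : Type*} [Fintype Ω] (G : SimpleGraph Ω)
    (hDH : DistanceHereditary G) (hcard : 2 ≤ Fintype.card Ω) :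
    (∃ a : Ω, ∃! b : Ω, G.Adj a b) ∨
      (∃ a b : Ω, a ≠ b ∧ ∀ γ, γ ≠ a → γ ≠ b → (G.Adj γ a ↔ G.Adj γ b)) := by
  classical
  open DHProof in
  by_cases hpend : ∃ a : Ω, ∃! b : Ω, G.Adj a b
  · exact Or.inl hpend
  · right
    have hnp : ∀ v : Ω, ¬∃! b : Ω, G.Adj v b := fun v hv => hpend ⟨v, hv⟩
    by_cases hedge : ∃ p q : Ω, G.Adj p q
    · obtain ⟨p0, q0, hpq⟩ := hedge
      obtain ⟨pq, -, hmax⟩ := Finset.exists_max_image (Finset.univ : Finset (Ω × Ω))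
        (fun pq => G.dist pq.1 pq.2) ⟨(p0, q0), Finset.mem_univ _⟩
      obtain ⟨u, x0⟩ := pq
      set k := G.dist u x0 with hk
      have hmax' : ∀ v w : Ω, G.dist v w ≤ k := fun v w => hmax (v, w) (Finset.mem_univ _)
      have hk1 : 1 ≤ k := by
        have h1 : G.dist p0 q0 = 1 := SimpleGraph.dist_eq_one_iff_adj.mpr hpq
        have := hmax' p0 q0
        omega
      have hru : G.Reachable u x0 := DHProof.reach_of_dist (by omega)
      by_cases hk1' : k = 1
      · -- the component of u is a clique; u and x0 are twins
        have hne : u ≠ x0 := by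
          intro h
          rw [h, SimpleGraph.dist_self] at hk
          omega
        refine ⟨u, x0, hne, fun γ hγu hγx => ?_⟩
        constructor
        · intro h
          have hr : G.Reachable γ x0 := h.reachable.trans hru
          have h2 : G.dist γ x0 ≤ 1 := hk1' ▸ hmax' γ x0
          have h0 : G.dist γ x0 ≠ 0 := by
            rw [ne_eq, hr.dist_eq_zero_iff]
            exact hγx
          exact SimpleGraph.dist_eq_one_iff_adj.mp (by omega)
        · intro h
          have hr : G.Reachable γ u := h.reachable.trans hru.symm
          have h2 : G.dist γ u ≤ 1 := hk1' ▸ hmax' γ u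
          have h0 : G.dist γ u ≠ 0 := by
            rw [ne_eq, hr.dist_eq_zero_iff]
            exact hγu
          exact SimpleGraph.dist_eq_one_iff_adj.mp (by omega)
      · have hk2 : 2 ≤ k := by omega
        by_cases htopadj : ∃ y z : Ω, G.dist u y = k ∧ G.dist u z = k ∧ G.Adj y z
        · obtain ⟨y, z, hy, hz, hyz⟩ := htopadj
          exact DHProof.caseI hDH hk2 (fun w => hmax' u w) hy hz hyz
        · push_neg at htopadj
          exact DHProof.caseII hDH hk2 (fun w => hmax' u w)
            (fun y z hy hz => htopadj y z hy hz) hk.symm hnp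
    · push_neg at hedge
      obtain ⟨a, b, hab⟩ := Fintype.exists_pair_of_one_lt_card (α := Ω) (by omega)
      exact ⟨a, b, hab, fun γ _ _ => iff_of_false (hedge γ a) (hedge γ b)⟩

/-- A finite distance-hereditary graph with at least two vertices has
a pendant vertex or two distinct twins. -/
theorem stmt_4 {Ω : Type*} [Fintype Ω] (G : SimpleGraph Ω)
    (hDH : DistanceHereditary G) (hcard : 2 ≤ Fintype.card Ω) :
    (∃ a : Ω, ∃! b : Ω, G.Adj a b) ∨ (∃ a b : Ω, a ≠ b ∧ IsTwin G a b) := by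
  rcases stmt_4' G hDH hcard with h | ⟨a, b, hne, htw⟩
  · exact Or.inl h
  · exact Or.inr ⟨a, b, hne, htw⟩
end

section
/- Let 𝒳 be a coherent configuration. Then the relation e_𝒳 of being 𝒳-twins is a parabolic of 𝒳; in particular, e_𝒳 is an equivalence relation on Ω and a union of basis relations of 𝒳. -/
open Set

universe u v

variable {Ω : Type*}

/-- Any two classes of the partition containing a common element coincide. -/
lemma cc_class_unique {Ω : Type*} (X : CoherentConfiguration Ω) {s t : Set (Ω × Ω)}
    (hs : s ∈ X.S) (ht : t ∈ X.S) {p : Ω × Ω} (hps : p ∈ s) (hpt : p ∈ t) : s = t := by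
  obtain ⟨u, ⟨huS, hpu⟩, huniq⟩ := X.isPartition.2 p
  rw [huniq s ⟨hs, hps⟩, huniq t ⟨ht, hpt⟩]

/-- Every pair has a class. -/
lemma cc_class_exists {Ω : Type*} (X : CoherentConfiguration Ω) (p : Ω × Ω) :
    ∃ s ∈ X.S, p ∈ s := by
  obtain ⟨u, ⟨huS, hpu⟩, _⟩ := X.isPartition.2 p
  exact ⟨u, huS, hpu⟩

/-- A class containing a diagonal pair is contained in the diagonal. -/
lemma cc_diag_class {Ω : Type*} (X : CoherentConfiguration Ω) {s : Set (Ω × Ω)}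
    (hs : s ∈ X.S) {c : Ω} (hc : (c, c) ∈ s) : ∀ p ∈ s, p.1 = p.2 := by
  obtain ⟨T, hTS, hT⟩ := X.diag_isRelation
  have hcd : (c, c) ∈ (diagRel (Set.univ : Set Ω)) := ⟨rfl, trivial⟩
  rw [← hT] at hcd
  obtain ⟨u, huT, hcu⟩ := hcd
  have : s = u := cc_class_unique X hs (hTS huT) hc hcu
  intro p hp
  have : p ∈ diagRel (Set.univ : Set Ω) := by
    rw [← hT]; exact ⟨u, huT, this ▸ hp⟩
  exact this.1

/-- Key lemma: if a basis relation contains a pair of `X`-twins, then every pair in it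
consists of `X`-twins. -/
lemma cc_twin_class {Ω : Type*} [Fintype Ω] (X : CoherentConfiguration Ω)
    {s : Set (Ω × Ω)} (hs : s ∈ X.S) {a b : Ω} (hab : (a, b) ∈ s) (htw : XTwin X a b)
    {a' b' : Ω} (hab' : (a', b') ∈ s) : XTwin X a' b' := by
  intro γ' hγa' hγb' u hu
  obtain ⟨r, hr, hr1⟩ := cc_class_exists X (γ', a')
  obtain ⟨r'', hr'', hr2⟩ := cc_class_exists X (γ', b')
  -- it suffices to show r = r''
  have key : r = r'' := by
    by_contra hne
    -- use intersection numbers with r* and r''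
    set rstar : Set (Ω × Ω) := {p : Ω × Ω | (p.2, p.1) ∈ r} with hrstar
    have hrstarS : rstar ∈ X.S := X.swap_mem r hr
    have hco := X.coherent rstar hrstarS r'' hr'' s hs (a', b') hab' (a, b) hab
    have hne1 : ({γ : Ω | (a', γ) ∈ rstar ∧ (γ, b') ∈ r''}).Nonempty := ⟨γ', hr1, hr2⟩
    have hpos : 0 < interNum rstar r'' (a', b') := by
      rw [interNum]
      exact Set.ncard_pos (Set.toFinite _) |>.mpr hne1
    rw [hco] at hpos
    have hne2 : ({γ : Ω | (a, γ) ∈ rstar ∧ (γ, b) ∈ r''}).Nonempty := by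
      rcases Set.eq_empty_or_nonempty {γ : Ω | (a, γ) ∈ rstar ∧ (γ, b) ∈ r''} with h | h
      · rw [interNum, h, Set.ncard_empty] at hpos; omega
      · exact h
    obtain ⟨γ, hγr, hγr''⟩ := hne2
    -- hγr : (a, γ) ∈ rstar, i.e. (γ, a) ∈ r ; hγr'' : (γ, b) ∈ r''
    have hγa : (γ, a) ∈ r := hγr
    by_cases hga : γ = a
    · -- then (a,a) ∈ r, so r ⊆ diag, contradicting (γ', a') ∈ r with γ' ≠ a'
      subst hga
      exact hγa' (cc_diag_class X hr hγa (γ', a') hr1)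
    · by_cases hgb : γ = b
      · subst hgb
        exact hγb' (cc_diag_class X hr'' hγr'' (γ', b') hr2)
      · -- γ ∉ {a, b}: use the twin property
        have := (htw γ hga hgb r hr).mp hγa
        exact hne (cc_class_unique X hr hr'' this hγr'')
  subst key
  constructor
  · intro h; rwa [cc_class_unique X hu hr h hr1]
  · intro h; rwa [cc_class_unique X hu hr h hr2]

/-- The relation `e_X` of being `X`-twins is a parabolic of `X`:
an equivalence relation on `Ω` which is a union of basis relations of `X`. -/
theorem stmt_6 {Ω : Type*} [Fintype Ω] (X : CoherentConfiguration Ω) :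
    IsParabolic X (twinRel X) := by
  constructor
  · refine ⟨fun a γ _ _ u _ => Iff.rfl, fun a b h γ hγb hγa u hu => (h γ hγa hγb u hu).symm, ?_⟩
    -- transitivity
    intro a b c hab hbc
    by_cases hac : a = c
    · subst hac; exact fun γ _ _ u _ => Iff.rfl
    by_cases hab' : a = b
    · subst hab'; exact hbc
    by_cases hbc' : b = c
    · subst hbc'; exact hab
    -- a, b, c pairwise distinct
    obtain ⟨s, hs, habs⟩ := cc_class_exists X (a, b)
    have hacs : (a, c) ∈ s := (hbc a hab' hac s hs).mp habs
    exact cc_twin_class X hs habs hab hacs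
  · refine ⟨{s ∈ X.S | s ⊆ twinRel X}, fun s hs => hs.1, ?_⟩
    apply Set.Subset.antisymm
    · rintro p ⟨s, hs, hps⟩; exact hs.2 hps
    · rintro ⟨a, b⟩ hab
      obtain ⟨s, hs, habs⟩ := cc_class_exists X (a, b)
      exact ⟨s, ⟨hs, fun ⟨a', b'⟩ h => cc_twin_class X hs habs hab h⟩, habs⟩
end

section
/- Let φ be an algebraic isomorphism from a coherent configuration 𝒳 to a coherent configuration 𝒳'. Then φ(e_𝒳) = e_{𝒳'}, i.e., φ maps the twin parabolic of 𝒳 onto the twin parabolic of 𝒳'. -/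
open Set

universe u v

variable {Ω : Type*}

section Stmt9Aux

open Set

attribute [local instance] Classical.propDecidable

/-- The transpose of a relation. -/
def swapRel (r : Set (Ω × Ω)) : Set (Ω × Ω) := {p | (p.2, p.1) ∈ r}

namespace CCAux

variable (X : CoherentConfiguration Ω)

lemma class_exists (p : Ω × Ω) : ∃ s ∈ X.S, p ∈ s := by
  obtain ⟨s, ⟨hs, hp⟩, -⟩ := X.isPartition.2 p
  exact ⟨s, hs, hp⟩

lemma class_unique {s t : Set (Ω × Ω)} (hs : s ∈ X.S) (ht : t ∈ X.S) {p : Ω × Ω}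
    (hps : p ∈ s) (hpt : p ∈ t) : s = t := by
  obtain ⟨u, -, hu⟩ := X.isPartition.2 p
  rw [hu s ⟨hs, hps⟩, hu t ⟨ht, hpt⟩]

lemma class_nonempty {s : Set (Ω × Ω)} (hs : s ∈ X.S) : s.Nonempty := by
  rw [Set.nonempty_iff_ne_empty]
  rintro rfl
  exact X.isPartition.1 hs

lemma interNum_pos [Fintype Ω] {r s : Set (Ω × Ω)} {p : Ω × Ω} :
    0 < interNum r s p ↔ ∃ γ, (p.1, γ) ∈ r ∧ (γ, p.2) ∈ s := by
  rw [interNum, Set.ncard_pos (Set.toFinite _)]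
  exact ⟨fun ⟨γ, h⟩ => ⟨γ, h⟩, fun ⟨γ, h⟩ => ⟨γ, h⟩⟩

lemma diag_dichot {s : Set (Ω × Ω)} (hs : s ∈ X.S) :
    s ⊆ diagRel (univ : Set Ω) ∨ ∀ p ∈ s, p.1 ≠ p.2 := by
  by_cases h : ∃ p ∈ s, p.1 = p.2
  · left
    obtain ⟨p, hp, hpd⟩ := h
    obtain ⟨T, hTS, hTd⟩ := X.diag_isRelation
    have hpu : p ∈ ⋃₀ T := by rw [hTd]; exact ⟨hpd, trivial⟩
    obtain ⟨t, htT, hpt⟩ := hpu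
    have hst : s = t := class_unique X hs (hTS htT) hp hpt
    rw [hst]
    intro q hq
    rw [← hTd]
    exact ⟨t, htT, hq⟩
  · right; push_neg at h; exact h

lemma diag_class (a : Ω) : ∃ e ∈ X.S, (a, a) ∈ e ∧ e ⊆ diagRel (univ : Set Ω) := by
  obtain ⟨e, he, hmem⟩ := class_exists X (a, a)
  refine ⟨e, he, hmem, ?_⟩
  rcases diag_dichot X he with h | h
  · exact h
  · exact absurd rfl (h _ hmem)

lemma diag_interNum {e t : Set (Ω × Ω)} (he : e ∈ X.S) (hed : e ⊆ diagRel (univ : Set Ω))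
    (ht : t ∈ X.S) {p : Ω × Ω} (hpt : p ∈ t) :
    interNum e e p = if t = e then 1 else 0 := by
  obtain ⟨a, b⟩ := p
  have hdiag : ∀ q ∈ e, Prod.fst q = Prod.snd q := fun q hq => (hed hq).1
  split_ifs with h
  · rw [h] at hpt
    have h12 : a = b := hdiag (a, b) hpt
    subst h12
    have hset : {γ : Ω | (a, γ) ∈ e ∧ (γ, a) ∈ e} = {a} := by
      ext γ
      simp only [mem_setOf_eq, mem_singleton_iff]
      constructor
      · rintro ⟨h1, -⟩
        exact (hdiag (a, γ) h1).symm
      · rintro rfl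
        exact ⟨hpt, hpt⟩
    show {γ : Ω | (a, γ) ∈ e ∧ (γ, a) ∈ e}.ncard = 1
    rw [hset]
    exact Set.ncard_singleton a
  · have hset : {γ : Ω | (a, γ) ∈ e ∧ (γ, b) ∈ e} = (∅ : Set Ω) := by
      ext γ
      simp only [mem_setOf_eq, mem_empty_iff_false, iff_false, not_and]
      intro h1 h2
      have e2 : γ = b := hdiag (γ, b) h2
      have hab : (a, b) ∈ e := by rw [e2] at h1; exact h1
      exact h (class_unique X ht he hpt hab)
    show {γ : Ω | (a, γ) ∈ e ∧ (γ, b) ∈ e}.ncard = 0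
    rw [hset]
    exact Set.ncard_empty Ω

lemma diag_of_interNum [Fintype Ω] {e : Set (Ω × Ω)} (he : e ∈ X.S)
    (h1 : ∀ p ∈ e, 0 < interNum e e p)
    (h0 : ∀ t ∈ X.S, t ≠ e → ∀ p ∈ t, interNum e e p = 0) :
    e ⊆ diagRel (univ : Set Ω) := by
  rcases diag_dichot X he with h | hll
  · exact h
  exfalso
  have htrans : ∀ a b c : Ω, (a, b) ∈ e → (b, c) ∈ e → (a, c) ∈ e := by
    intro a b c hab hbc
    obtain ⟨t, htS, hact⟩ := class_exists X (a, c)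
    by_contra hne
    have ht_ne : t ≠ e := fun hh => hne (hh ▸ hact)
    have h00 := h0 t htS ht_ne (a, c) hact
    have hpos : 0 < interNum e e (a, c) := interNum_pos.2 ⟨b, hab, hbc⟩
    omega
  have hdense : ∀ a b : Ω, (a, b) ∈ e → ∃ γ, (a, γ) ∈ e ∧ (γ, b) ∈ e := by
    intro a b hab
    obtain ⟨γ, hγ1, hγ2⟩ := interNum_pos.1 (h1 (a, b) hab)
    exact ⟨γ, hγ1, hγ2⟩
  have hloop : ∀ a : Ω, (a, a) ∉ e := fun a hh => hll (a, a) hh rfl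
  have key : ∀ n : ℕ, ∀ a b : Ω, (a, b) ∈ e →
      {γ : Ω | (a, γ) ∈ e ∧ (γ, b) ∈ e}.ncard ≤ n → False := by
    intro n
    induction n with
    | zero =>
      intro a b hab hle
      obtain ⟨γ, hg1, hg2⟩ := hdense a b hab
      have hpos : 0 < {γ : Ω | (a, γ) ∈ e ∧ (γ, b) ∈ e}.ncard :=
        (Set.ncard_pos (Set.toFinite _)).2 ⟨γ, hg1, hg2⟩
      omega
    | succ n ih =>
      intro a b hab hle
      obtain ⟨γ, hg1, hg2⟩ := hdense a b hab
      have hsub : {δ : Ω | (a, δ) ∈ e ∧ (δ, γ) ∈ e} ⊆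
          {δ : Ω | (a, δ) ∈ e ∧ (δ, b) ∈ e} \ {γ} := by
        rintro δ ⟨hd1, hd2⟩
        refine ⟨⟨hd1, htrans δ γ b hd2 hg2⟩, ?_⟩
        intro hdγ
        rw [Set.mem_singleton_iff] at hdγ
        subst hdγ
        exact hloop δ hd2
      have hγmem : γ ∈ {δ : Ω | (a, δ) ∈ e ∧ (δ, b) ∈ e} := ⟨hg1, hg2⟩
      have hcard : ({δ : Ω | (a, δ) ∈ e ∧ (δ, b) ∈ e} \ {γ}).ncard
          = {δ : Ω | (a, δ) ∈ e ∧ (δ, b) ∈ e}.ncard - 1 :=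
        Set.ncard_diff_singleton_of_mem hγmem
      have hle2 := Set.ncard_le_ncard hsub (Set.toFinite _)
      have hpos : 0 < {δ : Ω | (a, δ) ∈ e ∧ (δ, b) ∈ e}.ncard :=
        (Set.ncard_pos (Set.toFinite _)).2 ⟨γ, hγmem⟩
      exact ih a γ hg1 (by omega)
  obtain ⟨⟨a, b⟩, hab⟩ := class_nonempty X he
  exact key _ a b hab le_rfl

noncomputable def classOf (q : Ω × Ω) : Set (Ω × Ω) := (class_exists X q).choose

lemma classOf_mem (q : Ω × Ω) : classOf X q ∈ X.S ∧ q ∈ classOf X q :=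
  (class_exists X q).choose_spec

lemma classOf_eq {s : Set (Ω × Ω)} (hs : s ∈ X.S) {q : Ω × Ω} (hq : q ∈ s) :
    classOf X q = s :=
  class_unique X (classOf_mem X q).1 hs (classOf_mem X q).2 hq

/-- The set of points seeing both endpoints of `p` through the same basis relation. -/
def sameSet (p : Ω × Ω) : Set Ω := {γ | ∃ r ∈ X.S, (γ, p.1) ∈ r ∧ (γ, p.2) ∈ r}

lemma mem_sameSet {p : Ω × Ω} {γ : Ω} :
    γ ∈ sameSet X p ↔ ∃ r ∈ X.S, (γ, p.1) ∈ r ∧ (γ, p.2) ∈ r := Iff.rfl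

lemma sameSet_ncard [Fintype Ω] (p : Ω × Ω) :
    (sameSet X p).ncard = ∑ r ∈ X.S.toFinite.toFinset, interNum (swapRel r) r p := by
  classical
  have hfin : (sameSet X p).Finite := Set.toFinite _
  rw [Set.ncard_eq_toFinset_card _ hfin]
  rw [Finset.card_eq_sum_card_fiberwise (f := fun γ => classOf X (γ, p.1))
    (t := X.S.toFinite.toFinset) (by
      intro γ hγ
      simp only [Finset.mem_coe, Set.Finite.mem_toFinset] at hγ ⊢
      rw [mem_sameSet] at hγ
      obtain ⟨r, hrS, h1, -⟩ := hγ
      rw [classOf_eq X hrS h1]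
      exact hrS)]
  apply Finset.sum_congr rfl
  intro r hr
  rw [Set.Finite.mem_toFinset] at hr
  have hkey : interNum (swapRel r) r p = {γ : Ω | (γ, p.1) ∈ r ∧ (γ, p.2) ∈ r}.ncard := rfl
  rw [hkey, Set.ncard_eq_toFinset_card _ (Set.toFinite _)]
  congr 1
  ext γ
  simp only [Finset.mem_filter, Set.Finite.mem_toFinset, Set.mem_setOf_eq, mem_sameSet]
  constructor
  · rintro ⟨⟨r', hr'S, h1, h2⟩, hcl⟩
    have hcr : classOf X (γ, p.1) = r' := classOf_eq X hr'S h1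
    rw [hcr] at hcl
    exact hcl ▸ ⟨h1, h2⟩
  · rintro ⟨h1, h2⟩
    exact ⟨⟨r, hr, h1, h2⟩, classOf_eq X hr h1⟩

lemma sum_interNum_eq_card [Fintype Ω] (p : Ω × Ω) :
    ∑ r ∈ X.S.toFinite.toFinset, ∑ s ∈ X.S.toFinite.toFinset, interNum r s p
      = Fintype.card Ω := by
  classical
  rw [← Finset.sum_product' _ _ (fun r s => interNum r s p)]
  have h : (Finset.univ : Finset Ω).card =
      ∑ q ∈ X.S.toFinite.toFinset ×ˢ X.S.toFinite.toFinset,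
        (Finset.univ.filter
          (fun γ => (classOf X (p.1, γ), classOf X (γ, p.2)) = q)).card :=
    Finset.card_eq_sum_card_fiberwise (by
      intro γ _
      simp only [Finset.mem_coe, Finset.mem_product, Set.Finite.mem_toFinset]
      exact ⟨(classOf_mem X _).1, (classOf_mem X _).1⟩)
  rw [← Finset.card_univ, h]
  apply Finset.sum_congr rfl
  rintro ⟨r, s⟩ hq
  simp only [Finset.mem_product, Set.Finite.mem_toFinset] at hq
  dsimp only
  rw [interNum, Set.ncard_eq_toFinset_card _ (Set.toFinite _)]
  congr 1
  ext γ
  simp only [Finset.mem_filter, Finset.mem_univ, true_and, Set.Finite.mem_toFinset,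
    Set.mem_setOf_eq, Prod.mk.injEq]
  constructor
  · rintro ⟨h1, h2⟩
    exact ⟨classOf_eq X hq.1 h1, classOf_eq X hq.2 h2⟩
  · rintro ⟨h1, h2⟩
    exact ⟨h1 ▸ (classOf_mem X (p.1, γ)).2, h2 ▸ (classOf_mem X (γ, p.2)).2⟩

lemma sameSet_subset {p : Ω × Ω} (hnd : p.1 ≠ p.2) :
    sameSet X p ⊆ (univ : Set Ω) \ {p.1, p.2} := by
  intro γ hγ
  rw [mem_sameSet] at hγ
  obtain ⟨r, hrS, h1, h2⟩ := hγ
  refine ⟨trivial, ?_⟩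
  intro hmem
  rw [Set.mem_insert_iff, Set.mem_singleton_iff] at hmem
  rcases diag_dichot X hrS with hd | hl
  · rcases hmem with rfl | rfl
    · exact hnd (hd h2).1
    · exact hnd ((hd h1).1).symm
  · rcases hmem with rfl | rfl
    · exact hl _ h1 rfl
    · exact hl _ h2 rfl

lemma xtwin_self (a : Ω) : XTwin X a a := fun _ _ _ _ _ => Iff.rfl

lemma xtwin_iff_sameSet {p : Ω × Ω} (hnd : p.1 ≠ p.2) :
    XTwin X p.1 p.2 ↔ sameSet X p = (univ : Set Ω) \ {p.1, p.2} := by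
  constructor
  · intro htw
    refine subset_antisymm (sameSet_subset X hnd) ?_
    rintro γ ⟨-, hγ⟩
    rw [Set.mem_insert_iff, Set.mem_singleton_iff] at hγ
    push_neg at hγ
    obtain ⟨hγ1, hγ2⟩ := hγ
    obtain ⟨r, hrS, h1⟩ := class_exists X (γ, p.1)
    exact ⟨r, hrS, h1, (htw γ hγ1 hγ2 r hrS).1 h1⟩
  · intro hseq γ hγ1 hγ2 s hsS
    have hγm : γ ∈ sameSet X p := by
      rw [hseq]
      refine ⟨trivial, ?_⟩
      rw [Set.mem_insert_iff, Set.mem_singleton_iff]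
      push_neg
      exact ⟨hγ1, hγ2⟩
    rw [mem_sameSet] at hγm
    obtain ⟨r, hrS, h1, h2⟩ := hγm
    constructor
    · intro hh; rw [class_unique X hsS hrS hh h1]; exact h2
    · intro hh; rw [class_unique X hsS hrS hh h2]; exact h1

lemma ncard_compl_pair [Fintype Ω] {a b : Ω} (h : a ≠ b) :
    ((univ : Set Ω) \ {a, b}).ncard = Fintype.card Ω - 2 := by
  rw [Set.ncard_diff (Set.subset_univ _) (Set.toFinite _), Set.ncard_univ,
    Set.ncard_pair h, Nat.card_eq_fintype_card]

lemma xtwin_iff_ncard [Fintype Ω] {p : Ω × Ω} (hnd : p.1 ≠ p.2) :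
    XTwin X p.1 p.2 ↔ (sameSet X p).ncard = Fintype.card Ω - 2 := by
  rw [xtwin_iff_sameSet X hnd]
  constructor
  · intro h
    rw [h]
    exact ncard_compl_pair hnd
  · intro h
    refine Set.eq_of_subset_of_ncard_le (sameSet_subset X hnd) ?_ (Set.toFinite _)
    rw [ncard_compl_pair hnd, h]

variable {Ω' : Type v} (X' : CoherentConfiguration Ω') (φ : AlgIso X X')

lemma psi_mem {s : Set (Ω × Ω)} (hs : s ∈ X.S) : φ.toFun s ∈ X'.S := φ.bijOn.mapsTo hs

lemma psi_surj {t' : Set (Ω' × Ω')} (ht' : t' ∈ X'.S) : ∃ t ∈ X.S, φ.toFun t = t' := by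
  obtain ⟨t, htS, hte⟩ := φ.bijOn.surjOn ht'
  exact ⟨t, htS, hte⟩

lemma phi_diag [Fintype Ω] [Fintype Ω'] {e : Set (Ω × Ω)} (he : e ∈ X.S) :
    e ⊆ diagRel (univ : Set Ω) ↔ φ.toFun e ⊆ diagRel (univ : Set Ω') := by
  constructor
  · intro hed
    refine diag_of_interNum X' (psi_mem X X' φ he) ?_ ?_
    · intro p' hp'
      obtain ⟨p, hp⟩ := class_nonempty X he
      rw [← φ.card_eq e he e he e he p hp p' hp', diag_interNum X he hed he hp, if_pos rfl]
      norm_num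
    · intro t' ht' hne p' hp'
      obtain ⟨t, htS, rfl⟩ := psi_surj X X' φ ht'
      obtain ⟨p, hp⟩ := class_nonempty X htS
      have htne : t ≠ e := fun hh => hne (by rw [hh])
      rw [← φ.card_eq e he e he t htS p hp p' hp', diag_interNum X he hed htS hp, if_neg htne]
  · intro hed'
    refine diag_of_interNum X he ?_ ?_
    · intro p hp
      obtain ⟨p', hp'⟩ := class_nonempty X' (psi_mem X X' φ he)
      rw [φ.card_eq e he e he e he p hp p' hp',
        diag_interNum X' (psi_mem X X' φ he) hed' (psi_mem X X' φ he) hp', if_pos rfl]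
      norm_num
    · intro t htS hne p hp
      obtain ⟨p', hp'⟩ := class_nonempty X' (psi_mem X X' φ htS)
      have hne' : φ.toFun t ≠ φ.toFun e := fun hh => hne (φ.bijOn.injOn htS he hh)
      rw [φ.card_eq e he e he t htS p hp p' hp',
        diag_interNum X' (psi_mem X X' φ he) hed' (psi_mem X X' φ htS) hp', if_neg hne']

lemma phi_swap [Fintype Ω] [Fintype Ω'] {s : Set (Ω × Ω)} (hs : s ∈ X.S) :
    φ.toFun (swapRel s) = swapRel (φ.toFun s) := by
  obtain ⟨⟨a, b⟩, hab⟩ := class_nonempty X hs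
  obtain ⟨e, heS, haa, hed⟩ := diag_class X a
  have hswap : swapRel s ∈ X.S := X.swap_mem s hs
  obtain ⟨p', hp'⟩ := class_nonempty X' (psi_mem X X' φ heS)
  have hpos : 0 < interNum s (swapRel s) (a, a) := interNum_pos.2 ⟨b, hab, hab⟩
  rw [φ.card_eq s hs (swapRel s) hswap e heS (a, a) haa p' hp'] at hpos
  have hp'd : p'.1 = p'.2 := (((phi_diag X X' φ heS).1 hed) hp').1
  obtain ⟨γ', hγ1, hγ2⟩ := interNum_pos.1 hpos
  have hmem : (γ', p'.2) ∈ swapRel (φ.toFun s) := by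
    show (p'.2, γ') ∈ φ.toFun s
    rw [← hp'd]
    exact hγ1
  exact class_unique X' (psi_mem X X' φ hswap) (X'.swap_mem _ (psi_mem X X' φ hs)) hγ2 hmem

lemma toFinset_image [Fintype Ω] [Fintype Ω'] :
    X'.S.toFinite.toFinset = X.S.toFinite.toFinset.image φ.toFun := by
  classical
  ext r'
  rw [Set.Finite.mem_toFinset, Finset.mem_image]
  constructor
  · intro hr'
    obtain ⟨r, hrS, hre⟩ := psi_surj X X' φ hr'
    exact ⟨r, by rwa [Set.Finite.mem_toFinset], hre⟩
  · rintro ⟨r, hr, rfl⟩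
    rw [Set.Finite.mem_toFinset] at hr
    exact psi_mem X X' φ hr

lemma psi_injOn_finset [Fintype Ω] : ∀ x ∈ X.S.toFinite.toFinset, ∀ y ∈ X.S.toFinite.toFinset,
    φ.toFun x = φ.toFun y → x = y := by
  intro x hx y hy hxy
  rw [Set.Finite.mem_toFinset] at hx hy
  exact φ.bijOn.injOn hx hy hxy

lemma sameSet_transfer [Fintype Ω] [Fintype Ω'] {t : Set (Ω × Ω)} (ht : t ∈ X.S)
    {p : Ω × Ω} (hp : p ∈ t) {p' : Ω' × Ω'} (hp' : p' ∈ φ.toFun t) :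
    (sameSet X p).ncard = (sameSet X' p').ncard := by
  classical
  rw [sameSet_ncard X p, sameSet_ncard X' p', toFinset_image X X' φ,
    Finset.sum_image (psi_injOn_finset X X' φ)]
  apply Finset.sum_congr rfl
  intro r hr
  rw [Set.Finite.mem_toFinset] at hr
  rw [← phi_swap X X' φ hr]
  exact φ.card_eq (swapRel r) (X.swap_mem r hr) r hr t ht p hp p' hp'

lemma card_transfer [Fintype Ω] [Fintype Ω'] {t : Set (Ω × Ω)} (ht : t ∈ X.S)
    {p : Ω × Ω} (hp : p ∈ t) {p' : Ω' × Ω'} (hp' : p' ∈ φ.toFun t) :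
    Fintype.card Ω = Fintype.card Ω' := by
  classical
  rw [← sum_interNum_eq_card X p, ← sum_interNum_eq_card X' p', toFinset_image X X' φ,
    Finset.sum_image (psi_injOn_finset X X' φ)]
  apply Finset.sum_congr rfl
  intro r hr
  rw [Set.Finite.mem_toFinset] at hr
  rw [Finset.sum_image (psi_injOn_finset X X' φ)]
  apply Finset.sum_congr rfl
  intro s hs
  rw [Set.Finite.mem_toFinset] at hs
  exact φ.card_eq r hr s hs t ht p hp p' hp'

end CCAux

end Stmt9Aux

/-- An algebraic isomorphism maps the twin parabolic of `X` onto the twin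
parabolic of `X'` (where `φ` is extended to relations by taking unions of the images of
the basis relations involved). -/
theorem stmt_9 {Ω : Type u} {Ω' : Type v} [Fintype Ω] [Fintype Ω']
    (X : CoherentConfiguration Ω) (X' : CoherentConfiguration Ω')
    (φ : AlgIso X X') :
    ⋃₀ (φ.toFun '' {s | s ∈ X.S ∧ s ⊆ twinRel X}) = twinRel X' := by
  classical
  ext q'
  constructor
  · intro hq
    rw [Set.mem_sUnion] at hq
    obtain ⟨u', hu', hq'⟩ := hq
    rw [Set.mem_image] at hu'
    obtain ⟨s, hsmem, rfl⟩ := hu'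
    rw [Set.mem_setOf_eq] at hsmem
    obtain ⟨hsS, hstw⟩ := hsmem
    show XTwin X' q'.1 q'.2
    rcases CCAux.diag_dichot X hsS with hd | hl
    · have hdq : q'.1 = q'.2 := (((CCAux.phi_diag X X' φ hsS).1 hd) hq').1
      rw [hdq]
      exact CCAux.xtwin_self X' q'.2
    · obtain ⟨p, hp⟩ := CCAux.class_nonempty X hsS
      have hpnd : p.1 ≠ p.2 := hl p hp
      have hptw : XTwin X p.1 p.2 := hstw hp
      have hq'nd : q'.1 ≠ q'.2 := by
        intro hh
        have hsub : φ.toFun s ⊆ diagRel (univ : Set Ω') := by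
          rcases CCAux.diag_dichot X' (CCAux.psi_mem X X' φ hsS) with hd' | hl'
          · exact hd'
          · exact absurd hh (hl' q' hq')
        exact hpnd (((CCAux.phi_diag X X' φ hsS).2 hsub hp).1)
      have hcard : Fintype.card Ω = Fintype.card Ω' :=
        CCAux.card_transfer X X' φ hsS hp hq'
      have h1 : (CCAux.sameSet X p).ncard = Fintype.card Ω - 2 :=
        (CCAux.xtwin_iff_ncard X hpnd).1 hptw
      have h2 : (CCAux.sameSet X' q').ncard = Fintype.card Ω' - 2 := by
        rw [← CCAux.sameSet_transfer X X' φ hsS hp hq', h1, hcard]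
      exact (CCAux.xtwin_iff_ncard X' hq'nd).2 h2
  · intro hq'
    have htw' : XTwin X' q'.1 q'.2 := hq'
    obtain ⟨t', ht'S, hq't'⟩ := CCAux.class_exists X' q'
    obtain ⟨t, htS, rfl⟩ := CCAux.psi_surj X X' φ ht'S
    rw [Set.mem_sUnion]
    refine ⟨φ.toFun t, Set.mem_image_of_mem _ ?_, hq't'⟩
    rw [Set.mem_setOf_eq]
    refine ⟨htS, ?_⟩
    rcases CCAux.diag_dichot X htS with hd | hl
    · intro p hp
      show XTwin X p.1 p.2
      have hdp : p.1 = p.2 := (hd hp).1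
      rw [hdp]
      exact CCAux.xtwin_self X p.2
    · have hq'nd : q'.1 ≠ q'.2 := by
        intro hh
        have hsub : φ.toFun t ⊆ diagRel (univ : Set Ω') := by
          rcases CCAux.diag_dichot X' ht'S with hd' | hl'
          · exact hd'
          · exact absurd hh (hl' q' hq't')
        obtain ⟨p, hp⟩ := CCAux.class_nonempty X htS
        exact hl p hp (((CCAux.phi_diag X X' φ htS).2 hsub hp).1)
      have h2 : (CCAux.sameSet X' q').ncard = Fintype.card Ω' - 2 :=
        (CCAux.xtwin_iff_ncard X' hq'nd).1 htw'
      intro p hp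
      show XTwin X p.1 p.2
      have hpnd : p.1 ≠ p.2 := hl p hp
      have hcard : Fintype.card Ω = Fintype.card Ω' :=
        CCAux.card_transfer X X' φ htS hp hq't'
      have h1 : (CCAux.sameSet X p).ncard = Fintype.card Ω - 2 := by
        rw [CCAux.sameSet_transfer X X' φ htS hp hq't', h2, hcard]
      exact (CCAux.xtwin_iff_ncard X hpnd).2 h1
end

section
/- Let X be a finite graph, π a correct partition of X, and 𝒳 = WL(X)_π. Then every two vertices that are twins in X and belong to the same fiber of 𝒳 are 𝒳-twins. -/
open Set

universe u v

variable {Ω : Type*}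

section InvolAux

variable {Ω : Type*} (f : Ω → Ω)

/-- The componentwise action of `f` on pairs. -/
def swPair (p : Ω × Ω) : Ω × Ω := (f p.1, f p.2)

/-- The orbit of a pair under the involution `f` acting componentwise. -/
def orbPair (p : Ω × Ω) : Set (Ω × Ω) := {p, swPair f p}

variable {f}

lemma swPair_invol (hf : Function.Involutive f) : Function.Involutive (swPair f) :=
  fun p => by simp [swPair, hf p.1, hf p.2]

lemma mem_orbPair_self (p : Ω × Ω) : p ∈ orbPair f p := Or.inl rfl

lemma swPair_mem_orbPair (p : Ω × Ω) : swPair f p ∈ orbPair f p := Or.inr rfl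

lemma orbPair_swPair (hf : Function.Involutive f) (p : Ω × Ω) :
    orbPair f (swPair f p) = orbPair f p := by
  simp [orbPair, swPair_invol hf p, Set.pair_comm]

lemma orbPair_eq_of_mem (hf : Function.Involutive f) {p q : Ω × Ω}
    (h : q ∈ orbPair f p) : orbPair f q = orbPair f p := by
  rcases h with rfl | h
  · rfl
  · rcases h with rfl
    exact orbPair_swPair hf p

lemma swPair_mem_of_mem_orbPair (hf : Function.Involutive f) {p q : Ω × Ω}
    (h : q ∈ orbPair f p) : swPair f q ∈ orbPair f p := by
  rcases h with rfl | h
  · exact Or.inr rfl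
  · rcases h with rfl
    rw [swPair_invol hf p]
    exact Or.inl rfl

lemma interNum_swPair (hf : Function.Involutive f) {r s : Set (Ω × Ω)}
    (hr : ∀ p ∈ r, swPair f p ∈ r) (hs : ∀ p ∈ s, swPair f p ∈ s) (p : Ω × Ω) :
    interNum r s (swPair f p) = interNum r s p := by
  unfold interNum
  have himg : {γ : Ω | ((swPair f p).1, γ) ∈ r ∧ (γ, (swPair f p).2) ∈ s}
      = f '' {γ : Ω | (p.1, γ) ∈ r ∧ (γ, p.2) ∈ s} := by
    ext δ
    constructor
    · rintro ⟨h1, h2⟩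
      refine ⟨f δ, ⟨?_, ?_⟩, hf δ⟩
      · have := hr _ h1
        simpa [swPair, hf p.1] using this
      · have := hs _ h2
        simpa [swPair, hf p.2] using this
    · rintro ⟨γ, ⟨h1, h2⟩, rfl⟩
      exact ⟨hr _ h1, hs _ h2⟩
  rw [himg, Set.ncard_image_of_injective _ hf.injective]

/-- The coherent configuration whose basis relations are the orbits of an involution
acting componentwise on pairs. -/
noncomputable def involCC (f : Ω → Ω) (hf : Function.Involutive f) :
    CoherentConfiguration Ω where
  S := Set.range (orbPair f)
  isPartition := by
    constructor
    · rintro ⟨p, hp⟩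
      exact absurd (hp ▸ mem_orbPair_self p) (Set.notMem_empty p)
    · intro p
      refine ⟨orbPair f p, ⟨⟨p, rfl⟩, mem_orbPair_self p⟩, ?_⟩
      rintro c ⟨⟨q, rfl⟩, hpc⟩
      exact (orbPair_eq_of_mem hf hpc).symm
  diag_isRelation := by
    refine ⟨{c | ∃ p ∈ diagRel (Set.univ : Set Ω), c = orbPair f p}, ?_, ?_⟩
    · rintro c ⟨p, _, rfl⟩; exact ⟨p, rfl⟩
    · ext q
      constructor
      · rintro ⟨c, ⟨p, hp, rfl⟩, hq⟩
        rcases hq with rfl | hq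
        · exact hp
        · rcases hq with rfl
          exact ⟨congrArg f hp.1, trivial⟩
      · intro hq
        exact ⟨orbPair f q, ⟨q, hq, rfl⟩, mem_orbPair_self q⟩
  swap_mem := by
    rintro s ⟨p, rfl⟩
    refine ⟨(p.2, p.1), ?_⟩
    ext q
    simp only [orbPair, swPair, Set.mem_insert_iff, Set.mem_singleton_iff,
      Set.mem_setOf_eq, Prod.ext_iff]
    tauto
  coherent := by
    rintro r ⟨zr, rfl⟩ s ⟨zs, rfl⟩ t ⟨zt, rfl⟩ p hp q hq
    have hr : ∀ x ∈ orbPair f zr, swPair f x ∈ orbPair f zr :=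
      fun x hx => swPair_mem_of_mem_orbPair hf hx
    have hs : ∀ x ∈ orbPair f zs, swPair f x ∈ orbPair f zs :=
      fun x hx => swPair_mem_of_mem_orbPair hf hx
    have key : q = p ∨ q = swPair f p := by
      rcases hp with hp | hp <;> rcases hq with hq | hq
      · exact Or.inl (hq.trans hp.symm)
      · exact Or.inr (by rw [hq, hp])
      · exact Or.inr (by rw [hq, hp, swPair_invol hf zt])
      · exact Or.inl (hq.trans hp.symm)
    rcases key with rfl | rfl
    · rfl
    · exact (interNum_swPair hf hr hs p).symm
  
lemma involCC_isRelation (hf : Function.Involutive f) {r : Set (Ω × Ω)}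
    (hr : ∀ p ∈ r, swPair f p ∈ r) : (involCC f hf).IsRelation r := by
  refine ⟨{c | ∃ p ∈ r, c = orbPair f p}, ?_, ?_⟩
  · rintro c ⟨p, _, rfl⟩; exact ⟨p, rfl⟩
  · ext q
    constructor
    · rintro ⟨c, ⟨p, hp, rfl⟩, hq⟩
      rcases hq with rfl | hq
      · exact hp
      · rcases hq with rfl
        exact hr _ hp
    · intro hq
      exact ⟨orbPair f q, ⟨q, hq, rfl⟩, mem_orbPair_self q⟩

end InvolAux

/-- For a correct partition `π` of a finite graph `G` and
`X = WL(G)_π`, every two twins in `G` belonging to the same fiber of `X` are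
`X`-twins. -/
theorem stmt_11 {Ω : Type*} [Fintype Ω] (G : SimpleGraph Ω)
    (π : Set (Set Ω)) (X : CoherentConfiguration Ω)
    (hWL : IsWLPart G π X) (hcorrect : π = {Δ | X.IsFiber Δ})
    (a b : Ω) (h : IsTwin G a b)
    (hfib : ∃ Δ : Set Ω, X.IsFiber Δ ∧ a ∈ Δ ∧ b ∈ Δ) :
    XTwin X a b := by
  classical
  obtain ⟨Δ₀, hΔ₀, haΔ, hbΔ⟩ := hfib
  rcases eq_or_ne a b with rfl | hab
  · intro γ _ _ s _; rfl
  set τ : Ω → Ω := ⇑(Equiv.swap a b) with hτ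
  have hinv : Function.Involutive τ := fun x => Equiv.swap_apply_self a b x
  have hτa : τ a = b := Equiv.swap_apply_left a b
  have hτb : τ b = a := Equiv.swap_apply_right a b
  have hτo : ∀ x, x ≠ a → x ≠ b → τ x = x := fun x hx hx' =>
    Equiv.swap_apply_of_ne_of_ne hx hx'
  -- τ preserves membership in each part of π
  have hpart : ∀ Δ ∈ π, ∀ x ∈ Δ, τ x ∈ Δ := by
    intro Δ hΔ x hx
    have hΔfib : X.IsFiber Δ := by rw [hcorrect] at hΔ; exact hΔ
    rcases eq_or_ne x a with hxe | hxa
    · -- x = a : show b ∈ Δ, using that fibers are disjoint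
      have haΔ' : a ∈ Δ := by rw [← hxe]; exact hx
      obtain ⟨c, -, hcu⟩ := X.isPartition.2 ((a : Ω), (a : Ω))
      have h1 : diagRel Δ = c := hcu _ ⟨hΔfib, rfl, haΔ'⟩
      have h2 : diagRel Δ₀ = c := hcu _ ⟨hΔ₀, rfl, haΔ⟩
      have hbb : (b, b) ∈ diagRel Δ := by rw [h1, ← h2]; exact ⟨rfl, hbΔ⟩
      rw [hxe, hτa]; exact hbb.2
    rcases eq_or_ne x b with hxe | hxb
    · have hbΔ' : b ∈ Δ := by rw [← hxe]; exact hx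
      obtain ⟨c, -, hcu⟩ := X.isPartition.2 ((b : Ω), (b : Ω))
      have h1 : diagRel Δ = c := hcu _ ⟨hΔfib, rfl, hbΔ'⟩
      have h2 : diagRel Δ₀ = c := hcu _ ⟨hΔ₀, rfl, hbΔ⟩
      have haa : (a, a) ∈ diagRel Δ := by rw [h1, ← h2]; exact ⟨rfl, haΔ⟩
      rw [hxe, hτb]; exact haa.2
    · rw [hτo x hxa hxb]; exact hx
  -- τ is an automorphism of G
  have hadj : ∀ x y, G.Adj x y → G.Adj (τ x) (τ y) := by
    have key : ∀ x y, x ≠ a → x ≠ b → G.Adj x y → G.Adj x (τ y) := by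
      intro x y hxa hxb hxy
      rcases eq_or_ne y a with hy | hya
      · have hxy' : G.Adj x a := by rw [← hy]; exact hxy
        rw [hy, hτa]; exact (h x hxa hxb).mp hxy'
      rcases eq_or_ne y b with hy | hyb
      · have hxy' : G.Adj x b := by rw [← hy]; exact hxy
        rw [hy, hτb]; exact (h x hxa hxb).mpr hxy'
      · rw [hτo y hya hyb]; exact hxy
    intro x y hxy
    rcases eq_or_ne x a with hx | hxa
    · have hxy' : G.Adj a y := by rw [← hx]; exact hxy
      rw [hx, hτa]
      rcases eq_or_ne y a with hy | hya
      · exact absurd (by rw [hy] at hxy'; exact hxy' : G.Adj a a) (G.loopless.irrefl a)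
      rcases eq_or_ne y b with hy | hyb
      · rw [hy, hτb]
        exact (by rw [hy] at hxy'; exact hxy' : G.Adj a b).symm
      · rw [hτo y hya hyb]
        exact ((h y hya hyb).mp hxy'.symm).symm
    rcases eq_or_ne x b with hx | hxb
    · have hxy' : G.Adj b y := by rw [← hx]; exact hxy
      rw [hx, hτb]
      rcases eq_or_ne y a with hy | hya
      · rw [hy, hτa]
        exact (by rw [hy] at hxy'; exact hxy' : G.Adj b a).symm
      rcases eq_or_ne y b with hy | hyb
      · exact absurd (by rw [hy] at hxy'; exact hxy' : G.Adj b b) (G.loopless.irrefl b)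
      · rw [hτo y hya hyb]
        exact ((h y hya hyb).mpr hxy'.symm).symm
    · rw [hτo x hxa hxb]
      exact key x y hxa hxb hxy
  -- the orbit configuration of τ
  set Y := involCC τ hinv with hY
  have hYadj : Y.IsRelation (adjRel G) :=
    involCC_isRelation hinv (fun p hp => hadj p.1 p.2 hp)
  have hYdiag : ∀ Δ ∈ π, Y.IsRelation (diagRel Δ) := by
    intro Δ hΔ
    refine involCC_isRelation hinv (fun p hp => ?_)
    exact ⟨congrArg τ hp.1, hpart Δ hΔ p.1 hp.2⟩
  have hle : CCle X Y := hWL.2.2 Y hYadj hYdiag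
  -- conclude
  intro γ hγa hγb s hs
  have hsY : Y.IsRelation s := hle s ⟨{s}, by simpa using hs, Set.sUnion_singleton s⟩
  obtain ⟨T, hT, hTU⟩ := hsY
  have hτγ : τ γ = γ := hτo γ hγa hγb
  have hswab : swPair τ (γ, a) = (γ, b) := by simp [swPair, hτγ, hτa]
  have hswba : swPair τ (γ, b) = (γ, a) := by simp [swPair, hτγ, hτb]
  constructor
  · intro hmem
    rw [← hTU] at hmem ⊢
    obtain ⟨c, hcT, hpc⟩ := hmem
    obtain ⟨z, rfl⟩ := hT hcT
    refine ⟨_, hcT, ?_⟩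
    have := swPair_mem_of_mem_orbPair hinv hpc
    rwa [hswab] at this
  · intro hmem
    rw [← hTU] at hmem ⊢
    obtain ⟨c, hcT, hpc⟩ := hmem
    obtain ⟨z, rfl⟩ := hT hcT
    refine ⟨_, hcT, ?_⟩
    have := swPair_mem_of_mem_orbPair hinv hpc
    rwa [hswba] at this
end

section
/- Let X be a finite graph with vertex set Ω, π a correct partition of X, m a matching of WL(X)_π that is pendant or twin with respect to X, and Δ = Ω_-(m). Then WL(X)_π ∖ Δ = WL(X ∖ Δ)_{π ∖ {Δ}}, and π ∖ {Δ} is a correct partition of the graph X ∖ Δ. -/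
open Set

universe u v

variable {Ω : Type*}

section GeneralCC

variable {Ω : Type*} (W : CoherentConfiguration Ω)

lemma cc_exists_class (p : Ω × Ω) : ∃ s ∈ W.S, p ∈ s := by
  obtain ⟨s, ⟨hs, hp⟩, -⟩ := W.isPartition.2 p
  exact ⟨s, hs, hp⟩

lemma cc_class_eq {s s' : Set (Ω × Ω)} {p : Ω × Ω} (hs : s ∈ W.S) (hs' : s' ∈ W.S)
    (hp : p ∈ s) (hp' : p ∈ s') : s = s' := by
  obtain ⟨u, -, hu⟩ := W.isPartition.2 p
  exact (hu s ⟨hs, hp⟩).trans (hu s' ⟨hs', hp'⟩).symm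

lemma cc_nonempty {s : Set (Ω × Ω)} (hs : s ∈ W.S) : s.Nonempty := by
  rcases Set.eq_empty_or_nonempty s with h | h
  · exact absurd (h ▸ hs) W.isPartition.1
  · exact h

/-- A set is a relation iff it is saturated with respect to the basis classes. -/
lemma cc_rel_iff {r : Set (Ω × Ω)} :
    W.IsRelation r ↔ ∀ p ∈ r, ∀ s ∈ W.S, p ∈ s → s ⊆ r := by
  constructor
  · rintro ⟨T, hT, rfl⟩ p hp s hs hps
    obtain ⟨u, hu, hpu⟩ := hp
    have : s = u := cc_class_eq W hs (hT hu) hps hpu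
    exact this ▸ fun q hq => ⟨u, hu, this ▸ hq⟩
  · intro h
    refine ⟨{s ∈ W.S | s ⊆ r}, fun s hs => hs.1, ?_⟩
    apply Set.Subset.antisymm
    · rintro p ⟨u, hu, hpu⟩; exact hu.2 hpu
    · intro p hp
      obtain ⟨s, hs, hps⟩ := cc_exists_class W p
      exact ⟨s, ⟨hs, h p hp s hs hps⟩, hps⟩

lemma cc_diag_rel : W.IsRelation (diagRel (Set.univ : Set Ω)) := by
  obtain ⟨T, hT, hU⟩ := W.diag_isRelation
  exact ⟨T, hT, hU⟩

/-- The class of a diagonal point is contained in the diagonal. -/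
lemma cc_diag_class_s12 {u : Set (Ω × Ω)} {a : Ω} (hu : u ∈ W.S) (ha : (a, a) ∈ u) :
    u ⊆ diagRel (Set.univ : Set Ω) :=
  (cc_rel_iff W).1 (cc_diag_rel W) (a, a) ⟨rfl, trivial⟩ u hu ha

lemma cc_singleton_rel {s : Set (Ω × Ω)} (hs : s ∈ W.S) : W.IsRelation s :=
  ⟨{s}, by simpa using hs, by simp⟩

end GeneralCC
section FiberCC
open scoped Classical

variable {Ω : Type*} [Finite Ω] (W : CoherentConfiguration Ω)

lemma cc_interNum_diag_left {s u : Set (Ω × Ω)} (hdiag : u ⊆ diagRel (Set.univ : Set Ω))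
    {x : Ω × Ω} (hx : x ∈ s) :
    interNum u s x = if (x.1, x.1) ∈ u then 1 else 0 := by
  unfold interNum
  have hset : {γ : Ω | (x.1, γ) ∈ u ∧ (γ, x.2) ∈ s}
      = if (x.1, x.1) ∈ u then {x.1} else (∅ : Set Ω) := by
    ext γ
    constructor
    · rintro ⟨h1, h2⟩
      have : x.1 = γ := (hdiag h1).1
      subst this
      simp [h1]
    · intro h
      split_ifs at h with hc
      · rcases h with rfl
        exact ⟨hc, hx⟩
      · exact absurd h (Set.notMem_empty _)
  rw [hset]
  split_ifs <;> simp

lemma cc_interNum_diag_right {s u : Set (Ω × Ω)} (hdiag : u ⊆ diagRel (Set.univ : Set Ω))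
    {x : Ω × Ω} (hx : x ∈ s) :
    interNum s u x = if (x.2, x.2) ∈ u then 1 else 0 := by
  unfold interNum
  have hset : {γ : Ω | (x.1, γ) ∈ s ∧ (γ, x.2) ∈ u}
      = if (x.2, x.2) ∈ u then {x.2} else (∅ : Set Ω) := by
    ext γ
    constructor
    · rintro ⟨h1, h2⟩
      have : γ = x.2 := (hdiag h2).1
      subst this
      simp [h2]
    · intro h
      split_ifs at h with hc
      · rcases h with rfl
        exact ⟨hx, hc⟩
      · exact absurd h (Set.notMem_empty _)
  rw [hset]
  split_ifs <;> simp

lemma cc_fiber_const_fst {s u : Set (Ω × Ω)} (hs : s ∈ W.S) (hu : u ∈ W.S)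
    (hdiag : u ⊆ diagRel (Set.univ : Set Ω)) {p q : Ω × Ω} (hp : p ∈ s) (hq : q ∈ s) :
    (p.1, p.1) ∈ u ↔ (q.1, q.1) ∈ u := by
  have h := W.coherent u hu s hs s hs p hp q hq
  rw [cc_interNum_diag_left hdiag hp, cc_interNum_diag_left hdiag hq] at h
  split_ifs at h with h1 h2 h2 <;> simp_all

lemma cc_fiber_const_snd {s u : Set (Ω × Ω)} (hs : s ∈ W.S) (hu : u ∈ W.S)
    (hdiag : u ⊆ diagRel (Set.univ : Set Ω)) {p q : Ω × Ω} (hp : p ∈ s) (hq : q ∈ s) :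
    (p.2, p.2) ∈ u ↔ (q.2, q.2) ∈ u := by
  have h := W.coherent s hs u hu s hs p hp q hq
  rw [cc_interNum_diag_right hdiag hp, cc_interNum_diag_right hdiag hq] at h
  split_ifs at h with h1 h2 h2 <;> simp_all

/-- `Ω₋(m)` is a fiber for a matching `m`, and in fact the class of any diagonal
point of `Ω₋(m)` equals `1_{Ω₋(m)}`. -/
lemma cc_matching_minus_fiber {m : Set (Ω × Ω)} (hm : IsMatchingCC W m) :
    diagRel (OmegaMinus m) ∈ W.S := by
  obtain ⟨hmS, -, -, -⟩ := hm
  obtain ⟨⟨a0, b0⟩, hab0⟩ := cc_nonempty W hmS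
  obtain ⟨u, hu, hau⟩ := cc_exists_class W (a0, a0)
  have hdiag := cc_diag_class_s12 W hu hau
  have hkey : u = diagRel (OmegaMinus m) := by
    ext ⟨x, y⟩
    constructor
    · intro hxy
      have hxyeq : x = y := (hdiag hxy).1
      subst hxyeq
      refine ⟨rfl, ?_⟩
      -- valency argument
      have hm' := W.swap_mem m hmS
      have hco := W.coherent m hmS _ hm' u hu (x, x) hxy (a0, a0) hau
      have hx0 : {γ : Ω | (a0, γ) ∈ m ∧ (γ, a0) ∈ {p : Ω × Ω | (p.2, p.1) ∈ m}}
          = {γ : Ω | (a0, γ) ∈ m} := by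
        ext γ; simp only [Set.mem_setOf_eq]; tauto
      have hx1 : {γ : Ω | (x, γ) ∈ m ∧ (γ, x) ∈ {p : Ω × Ω | (p.2, p.1) ∈ m}}
          = {γ : Ω | (x, γ) ∈ m} := by
        ext γ; simp only [Set.mem_setOf_eq]; tauto
      unfold interNum at hco
      simp only [hx0, hx1] at hco
      have hpos : 0 < {γ : Ω | (a0, γ) ∈ m}.ncard :=
        (Set.ncard_pos (Set.toFinite _)).2 ⟨b0, hab0⟩
      rw [← hco] at hpos
      obtain ⟨γ, hγ⟩ := (Set.ncard_pos (Set.toFinite _)).1 hpos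
      exact ⟨γ, hγ⟩
    · rintro ⟨hxyeq, b, hb⟩
      have : x = y := hxyeq
      subst this
      have := (cc_fiber_const_fst W hmS hu hdiag hab0 hb).1 hau
      exact this
  exact hkey ▸ hu

lemma swap_isMatching {m : Set (Ω × Ω)} (hm : IsMatchingCC W m) :
    IsMatchingCC W {p : Ω × Ω | (p.2, p.1) ∈ m} := by
  obtain ⟨hmS, hirr, hr, hl⟩ := hm
  refine ⟨W.swap_mem m hmS, ?_, ?_, ?_⟩
  · intro p hp h
    exact hirr (p.2, p.1) hp h.symm
  · intro a b c hb hc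
    exact hl b c a hb hc
  · intro a b c hb hc
    exact hr c a b hb hc

lemma OmegaPlus_swap (m : Set (Ω × Ω)) :
    OmegaMinus {p : Ω × Ω | (p.2, p.1) ∈ m} = OmegaPlus m := rfl

lemma cc_matching_plus_fiber {m : Set (Ω × Ω)} (hm : IsMatchingCC W m) :
    diagRel (OmegaPlus m) ∈ W.S := by
  have := cc_matching_minus_fiber W (swap_isMatching W hm)
  rwa [OmegaPlus_swap] at this

end FiberCC
section RestrictCC

open scoped Classical

variable {Ω : Type*} [Finite Ω]

lemma mem_restrictRel {Δ : Set Ω} {s : Set (Ω × Ω)} {p : ↥(Δᶜ) × ↥(Δᶜ)} :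
    p ∈ restrictRel Δ s ↔ ((p.1 : Ω), (p.2 : Ω)) ∈ s := Iff.rfl

lemma interNum_restrict {Δ : Set Ω} (r s : Set (Ω × Ω)) (p : ↥(Δᶜ) × ↥(Δᶜ)) :
    interNum (restrictRel Δ r) (restrictRel Δ s) p
      = {γ : Ω | γ ∈ Δᶜ ∧ ((p.1 : Ω), γ) ∈ r ∧ (γ, (p.2 : Ω)) ∈ s}.ncard := by
  unfold interNum
  rw [← Set.ncard_image_of_injective _ (Subtype.val_injective
      (p := fun x => x ∈ Δᶜ))]
  congr 1
  ext γ
  simp only [Set.mem_image, Set.mem_setOf_eq]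
  constructor
  · rintro ⟨c, ⟨h1, h2⟩, rfl⟩
    exact ⟨c.2, h1, h2⟩
  · rintro ⟨h0, h1, h2⟩
    exact ⟨⟨γ, h0⟩, ⟨h1, h2⟩, rfl⟩

lemma cc_snd_dichotomy (W : CoherentConfiguration Ω) {Δ : Set Ω}
    (hΔ : diagRel Δ ∈ W.S) {r : Set (Ω × Ω)} (hr : r ∈ W.S) :
    (∀ x ∈ r, x.2 ∈ Δ) ∨ (∀ x ∈ r, x.2 ∉ Δ) := by
  have hdiag : diagRel Δ ⊆ diagRel (Set.univ : Set Ω) := fun p hp => ⟨hp.1, trivial⟩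
  obtain ⟨x0, hx0⟩ := cc_nonempty W hr
  have key : ∀ x ∈ r, (x.2 ∈ Δ ↔ x0.2 ∈ Δ) := by
    intro x hx
    have h := cc_fiber_const_snd W hr hΔ hdiag hx hx0
    constructor
    · intro hxd
      exact (h.1 ⟨rfl, hxd⟩).2
    · intro hxd
      exact (h.2 ⟨rfl, hxd⟩).2
  by_cases h0 : x0.2 ∈ Δ
  · exact Or.inl fun x hx => (key x hx).2 h0
  · exact Or.inr fun x hx hxd => h0 ((key x hx).1 hxd)

/-- The restriction of a coherent configuration to the complement of a fiber. -/
noncomputable def restrictCC (W : CoherentConfiguration Ω) (Δ : Set Ω)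
    (hΔ : diagRel Δ ∈ W.S) : CoherentConfiguration ↥(Δᶜ) where
  S := {t | t.Nonempty ∧ ∃ s ∈ W.S, t = restrictRel Δ s}
  isPartition := by
    constructor
    · rintro ⟨⟨p, hp⟩, -⟩
      exact hp
    · intro p
      obtain ⟨u, hu, hpu⟩ := cc_exists_class W ((p.1 : Ω), (p.2 : Ω))
      refine ⟨restrictRel Δ u, ⟨⟨⟨p, hpu⟩, u, hu, rfl⟩, hpu⟩, ?_⟩
      rintro t ⟨⟨-, s', hs', rfl⟩, hpt⟩
      rw [cc_class_eq W hs' hu hpt hpu]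
  diag_isRelation := by
    refine ⟨{t | (t.Nonempty ∧ ∃ s ∈ W.S, t = restrictRel Δ s) ∧
        t ⊆ diagRel (Set.univ : Set ↥(Δᶜ))}, fun t ht => ht.1, ?_⟩
    apply Set.Subset.antisymm
    · rintro p ⟨t, ht, hpt⟩
      exact ht.2 hpt
    · rintro ⟨c, c'⟩ ⟨hcc, -⟩
      have hcc' : c = c' := hcc
      subst hcc'
      obtain ⟨u, hu, hcu⟩ := cc_exists_class W ((c : Ω), (c : Ω))
      have hudiag := cc_diag_class_s12 W hu hcu
      refine ⟨restrictRel Δ u, ⟨⟨⟨(c, c), hcu⟩, u, hu, rfl⟩, ?_⟩, hcu⟩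
      intro p hp
      exact ⟨Subtype.val_injective (hudiag hp).1, trivial⟩
  swap_mem := by
    rintro t ⟨⟨p0, hp0⟩, s, hs, rfl⟩
    refine ⟨⟨(p0.2, p0.1), hp0⟩, {p : Ω × Ω | (p.2, p.1) ∈ s}, W.swap_mem s hs, rfl⟩
  coherent := by
    rintro r ⟨-, r', hr', rfl⟩ s ⟨-, s', hs', rfl⟩ t ⟨-, t', ht', rfl⟩ p hp q hq
    rw [interNum_restrict, interNum_restrict]
    rcases cc_snd_dichotomy W hΔ hr' with hdic | hdic
    · have he : ∀ x : ↥(Δᶜ) × ↥(Δᶜ),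
          {γ : Ω | γ ∈ Δᶜ ∧ ((x.1 : Ω), γ) ∈ r' ∧ (γ, (x.2 : Ω)) ∈ s'} = ∅ := by
        intro x
        ext γ
        simp only [Set.mem_setOf_eq, Set.mem_empty_iff_false, iff_false]
        rintro ⟨hγ, h1, -⟩
        exact hγ (hdic _ h1)
      rw [he p, he q]
    · have he : ∀ x : ↥(Δᶜ) × ↥(Δᶜ),
          {γ : Ω | γ ∈ Δᶜ ∧ ((x.1 : Ω), γ) ∈ r' ∧ (γ, (x.2 : Ω)) ∈ s'}
            = {γ : Ω | ((x.1 : Ω), γ) ∈ r' ∧ (γ, (x.2 : Ω)) ∈ s'} := by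
        intro x
        ext γ
        simp only [Set.mem_setOf_eq, Set.mem_compl_iff]
        exact ⟨fun h => h.2, fun h => ⟨hdic _ h.1, h⟩⟩
      rw [he p, he q]
      exact W.coherent r' hr' s' hs' t' ht' _ hp _ hq

lemma restrictCC_S (W : CoherentConfiguration Ω) (Δ : Set Ω) (hΔ : diagRel Δ ∈ W.S) :
    (restrictCC W Δ hΔ).S = {t | t.Nonempty ∧ ∃ s ∈ W.S, t = restrictRel Δ s} := rfl

lemma restrict_isRelation (W : CoherentConfiguration Ω) (Δ : Set Ω)
    (hΔ : diagRel Δ ∈ W.S) {r : Set (Ω × Ω)} (hr : W.IsRelation r) :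
    (restrictCC W Δ hΔ).IsRelation (restrictRel Δ r) := by
  obtain ⟨T, hT, rfl⟩ := hr
  refine ⟨{t | ∃ s ∈ T, t = restrictRel Δ s ∧ t.Nonempty}, ?_, ?_⟩
  · rintro t ⟨s, hsT, rfl, hne⟩
    exact ⟨hne, s, hT hsT, rfl⟩
  · ext p
    constructor
    · rintro ⟨t, ⟨s, hsT, rfl, -⟩, hpt⟩
      exact ⟨s, hsT, hpt⟩
    · rintro (hp : (_, _) ∈ ⋃₀ T)
      obtain ⟨s, hsT, hps⟩ := hp
      exact ⟨restrictRel Δ s, ⟨s, hsT, rfl, ⟨p, hps⟩⟩, hps⟩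

end RestrictCC
section ExtCC

open scoped Classical

variable {Ω : Type*} [Finite Ω] {Δ : Set Ω}

/-- The side of `Ω` indexed by a Boolean: `Δ` or its complement. -/
def extSide (Δ : Set Ω) (e : Bool) : Set Ω := if e then Δ else Δᶜ

lemma extSide_eq_of_mem {a : Ω} {e e' : Bool} (h : a ∈ extSide Δ e)
    (h' : a ∈ extSide Δ e') : e = e' := by
  cases e <;> cases e' <;> simp_all [extSide]

/-- The lift of a relation `s` on `Δᶜ` to the pair of sides `(e1, e2)`. -/
def extT (Δ : Set Ω) (g : Ω → ↥(Δᶜ)) (e1 e2 : Bool) (s : Set (↥(Δᶜ) × ↥(Δᶜ))) :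
    Set (Ω × Ω) :=
  {p | p.1 ∈ extSide Δ e1 ∧ p.2 ∈ extSide Δ e2 ∧ (g p.1, g p.2) ∈ s}

variable {g : Ω → ↥(Δᶜ)} {Γ' : Set ↥(Δᶜ)} {Y : CoherentConfiguration ↥(Δᶜ)}

section Lemmas

variable (hg1 : ∀ (a : Ω) (h : a ∈ Δᶜ), g a = ⟨a, h⟩)
  (hg2 : ∀ a ∈ Δ, g a ∈ Γ')
  (hginj : Set.InjOn g Δ)
  (hgsurj : ∀ c ∈ Γ', ∃ a ∈ Δ, g a = c)
  (hfib2 : ∀ s ∈ Y.S, ∀ p ∈ s, ∀ q ∈ s, (p.2 ∈ Γ' ↔ q.2 ∈ Γ'))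

include hg1 in
lemma extg_coe (c : ↥(Δᶜ)) : g (c : Ω) = c := by
  rw [hg1 (c : Ω) c.2]

include hg1 hginj in
lemma extg_side_inj {a b : Ω} {e : Bool} (ha : a ∈ extSide Δ e)
    (hb : b ∈ extSide Δ e) (h : g a = g b) : a = b := by
  cases e with
  | true => exact hginj ha hb h
  | false =>
    have ha' := hg1 a ha
    have hb' := hg1 b hb
    rw [ha', hb'] at h
    exact congrArg Subtype.val h

include hg2 hfib2 in
lemma ext_con2 {e1 : Bool} {s : Set (↥(Δᶜ) × ↥(Δᶜ))} (hs : s ∈ Y.S)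
    (hne : (extT Δ g e1 true s).Nonempty) : ∀ x ∈ s, x.2 ∈ Γ' := by
  obtain ⟨p0, hp01, hp02, hp03⟩ := hne
  intro x hx
  exact (hfib2 s hs x hx _ hp03).2 (hg2 p0.2 (by simpa [extSide] using hp02))

lemma extT_unique {e1 e2 e1' e2' : Bool} {s s' : Set (↥(Δᶜ) × ↥(Δᶜ))}
    (hs : s ∈ Y.S) (hs' : s' ∈ Y.S) {p : Ω × Ω}
    (hp : p ∈ extT Δ g e1 e2 s) (hp' : p ∈ extT Δ g e1' e2' s') :
    e1 = e1' ∧ e2 = e2' ∧ s = s' :=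
  ⟨extSide_eq_of_mem hp.1 hp'.1, extSide_eq_of_mem hp.2.1 hp'.2.1,
    cc_class_eq Y hs hs' hp.2.2 hp'.2.2⟩

end Lemmas

end ExtCC
section ExtCC2

open scoped Classical

variable {Ω : Type*} [Finite Ω] {Δ : Set Ω} {g : Ω → ↥(Δᶜ)} {Γ' : Set ↥(Δᶜ)}
  {Y : CoherentConfiguration ↥(Δᶜ)}

lemma ext_count_ff (hg1 : ∀ (a : Ω) (h : a ∈ Δᶜ), g a = ⟨a, h⟩)
    (r' s' : Set (↥(Δᶜ) × ↥(Δᶜ))) (x1 x2 : Ω) :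
    {γ : Ω | γ ∈ Δᶜ ∧ (g x1, g γ) ∈ r' ∧ (g γ, g x2) ∈ s'}.ncard
      = interNum r' s' (g x1, g x2) := by
  unfold interNum
  rw [← Set.ncard_image_of_injective _ (Subtype.val_injective
      (p := fun x => x ∈ Δᶜ))]
  congr 1
  ext γ
  simp only [Set.mem_image, Set.mem_setOf_eq]
  constructor
  · rintro ⟨hγ, h1, h2⟩
    refine ⟨⟨γ, hγ⟩, ?_, rfl⟩
    rw [← hg1 γ hγ]
    exact ⟨h1, h2⟩
  · rintro ⟨c, ⟨h1, h2⟩, rfl⟩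
    rw [extg_coe hg1 c]
    exact ⟨c.2, h1, h2⟩

lemma ext_count_tt (hg2 : ∀ a ∈ Δ, g a ∈ Γ') (hginj : Set.InjOn g Δ)
    (hgsurj : ∀ c ∈ Γ', ∃ a ∈ Δ, g a = c)
    {r' : Set (↥(Δᶜ) × ↥(Δᶜ))} (s' : Set (↥(Δᶜ) × ↥(Δᶜ))) {x1 : Ω} (x2 : Ω)
    (hΓ : ∀ c, (g x1, c) ∈ r' → c ∈ Γ') :
    {γ : Ω | γ ∈ Δ ∧ (g x1, g γ) ∈ r' ∧ (g γ, g x2) ∈ s'}.ncard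
      = interNum r' s' (g x1, g x2) := by
  unfold interNum
  rw [← Set.ncard_image_of_injOn (f := g)
      (fun a ha b hb hab => hginj ha.1 hb.1 hab)]
  congr 1
  ext c
  simp only [Set.mem_image, Set.mem_setOf_eq]
  constructor
  · rintro ⟨γ, ⟨-, h1, h2⟩, rfl⟩
    exact ⟨h1, h2⟩
  · rintro ⟨h1, h2⟩
    obtain ⟨a, haΔ, rfl⟩ := hgsurj c (hΓ c h1)
    exact ⟨a, ⟨haΔ, h1, h2⟩, rfl⟩

/-- The extension of a coherent configuration on `Δᶜ` back to `Ω`, where the points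
of `Δ` are clones (via `g`) of points of `Γ' ⊆ Δᶜ`. -/
noncomputable def extCC (Y : CoherentConfiguration ↥(Δᶜ)) (g : Ω → ↥(Δᶜ)) (Γ' : Set ↥(Δᶜ))
    (hg1 : ∀ (a : Ω) (h : a ∈ Δᶜ), g a = ⟨a, h⟩)
    (hg2 : ∀ a ∈ Δ, g a ∈ Γ')
    (hginj : Set.InjOn g Δ)
    (hgsurj : ∀ c ∈ Γ', ∃ a ∈ Δ, g a = c)
    (hfib2 : ∀ s ∈ Y.S, ∀ p ∈ s, ∀ q ∈ s, (p.2 ∈ Γ' ↔ q.2 ∈ Γ')) :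
    CoherentConfiguration Ω where
  S := {t | t.Nonempty ∧ ∃ e1 e2 s, s ∈ Y.S ∧ t = extT Δ g e1 e2 s}
  isPartition := by
    constructor
    · rintro ⟨⟨p, hp⟩, -⟩
      exact hp
    · intro p
      obtain ⟨u, hu, hpu⟩ := cc_exists_class Y (g p.1, g p.2)
      have hside : ∀ a : Ω, a ∈ extSide Δ (if a ∈ Δ then true else false) := by
        intro a
        by_cases h : a ∈ Δ <;> simp [extSide, h]
      have hmem : p ∈ extT Δ g (if p.1 ∈ Δ then true else false)
          (if p.2 ∈ Δ then true else false) u := ⟨hside p.1, hside p.2, hpu⟩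
      refine ⟨_, ⟨⟨⟨p, hmem⟩, _, _, u, hu, rfl⟩, hmem⟩, ?_⟩
      rintro t ⟨⟨-, e1, e2, s, hs, rfl⟩, hpt⟩
      obtain ⟨he1, he2, hseq⟩ := extT_unique hs hu hpt hmem
      rw [he1, he2, hseq]
  diag_isRelation := by
    refine ⟨{t | (t.Nonempty ∧ ∃ e1 e2 s, s ∈ Y.S ∧ t = extT Δ g e1 e2 s) ∧
        t ⊆ diagRel (Set.univ : Set Ω)}, fun t ht => ht.1, ?_⟩
    apply Set.Subset.antisymm
    · rintro p ⟨t, ht, hpt⟩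
      exact ht.2 hpt
    · rintro ⟨a, a'⟩ ⟨(haa : a = a'), -⟩
      subst haa
      obtain ⟨u, hu, hau⟩ := cc_exists_class Y (g a, g a)
      have hudiag := cc_diag_class_s12 Y hu hau
      have hside : ∀ b : Ω, b ∈ extSide Δ (if b ∈ Δ then true else false) := by
        intro b
        by_cases h : b ∈ Δ <;> simp [extSide, h]
      have hmem : (a, a) ∈ extT Δ g (if a ∈ Δ then true else false)
          (if a ∈ Δ then true else false) u := ⟨hside a, hside a, hau⟩
      refine ⟨_, ⟨⟨⟨(a, a), hmem⟩, _, _, u, hu, rfl⟩, ?_⟩, hmem⟩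
      rintro ⟨b, b'⟩ ⟨hb1, hb2, hb3⟩
      have : g b = g b' := (hudiag hb3).1
      exact ⟨extg_side_inj hg1 hginj hb1 hb2 this, trivial⟩
  swap_mem := by
    rintro t ⟨⟨p0, hp0⟩, e1, e2, s, hs, rfl⟩
    refine ⟨⟨(p0.2, p0.1), hp0⟩,
      e2, e1, {x : ↥(Δᶜ) × ↥(Δᶜ) | (x.2, x.1) ∈ s}, Y.swap_mem s hs, ?_⟩
    ext ⟨b, b'⟩
    simp only [extT, Set.mem_setOf_eq]
    tauto
  coherent := by
    rintro r ⟨hrne, e1, e2, r', hr', rfl⟩ s ⟨hsne, e3, e4, s', hs', rfl⟩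
      t ⟨htne, f1, f2, t', ht', rfl⟩ p hp q hq
    obtain ⟨hp1, hp2, hp3⟩ := hp
    obtain ⟨hq1, hq2, hq3⟩ := hq
    unfold interNum
    by_cases he1 : e1 = f1
    case neg =>
      have hz : ∀ (x : Ω × Ω), x.1 ∈ extSide Δ f1 →
          {γ : Ω | (x.1, γ) ∈ extT Δ g e1 e2 r' ∧ (γ, x.2) ∈ extT Δ g e3 e4 s'} = ∅ := by
        intro x hx
        ext γ
        simp only [Set.mem_setOf_eq, Set.mem_empty_iff_false, iff_false]
        rintro ⟨⟨h1, -, -⟩, -⟩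
        exact he1 (extSide_eq_of_mem h1 hx)
      rw [hz p hp1, hz q hq1]
    case pos =>
    by_cases he4 : e4 = f2
    case neg =>
      have hz : ∀ (x : Ω × Ω), x.2 ∈ extSide Δ f2 →
          {γ : Ω | (x.1, γ) ∈ extT Δ g e1 e2 r' ∧ (γ, x.2) ∈ extT Δ g e3 e4 s'} = ∅ := by
        intro x hx
        ext γ
        simp only [Set.mem_setOf_eq, Set.mem_empty_iff_false, iff_false]
        rintro ⟨-, -, h2, -⟩
        exact he4 (extSide_eq_of_mem h2 hx)
      rw [hz p hp2, hz q hq2]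
    case pos =>
    by_cases he23 : e2 = e3
    case neg =>
      have hz : ∀ (x : Ω × Ω),
          {γ : Ω | (x.1, γ) ∈ extT Δ g e1 e2 r' ∧ (γ, x.2) ∈ extT Δ g e3 e4 s'} = ∅ := by
        intro x
        ext γ
        simp only [Set.mem_setOf_eq, Set.mem_empty_iff_false, iff_false]
        rintro ⟨⟨-, h1, -⟩, h2, -, -⟩
        exact he23 (extSide_eq_of_mem h1 h2)
      rw [hz p, hz q]
    case pos =>
    subst he1 he4 he23
    have hset : ∀ (x : Ω × Ω), x.1 ∈ extSide Δ e1 → x.2 ∈ extSide Δ e4 →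
        {γ : Ω | (x.1, γ) ∈ extT Δ g e1 e2 r' ∧ (γ, x.2) ∈ extT Δ g e2 e4 s'}
          = {γ : Ω | γ ∈ extSide Δ e2 ∧ (g x.1, g γ) ∈ r' ∧ (g γ, g x.2) ∈ s'} := by
      intro x hx1 hx2
      ext γ
      simp only [extT, Set.mem_setOf_eq]
      tauto
    have hmain : ∀ (x : Ω × Ω), x.1 ∈ extSide Δ e1 → x.2 ∈ extSide Δ e4 →
        {γ : Ω | (x.1, γ) ∈ extT Δ g e1 e2 r' ∧ (γ, x.2) ∈ extT Δ g e2 e4 s'}.ncard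
          = interNum r' s' (g x.1, g x.2) := by
      intro x hx1 hx2
      rw [hset x hx1 hx2]
      cases e2 with
      | false =>
        have : extSide Δ false = Δᶜ := rfl
        rw [this]
        exact ext_count_ff hg1 r' s' x.1 x.2
      | true =>
        have : extSide Δ true = Δ := rfl
        rw [this]
        exact ext_count_tt hg2 hginj hgsurj s' x.2
          (fun c hc => ext_con2 hg2 hfib2 hr' hrne (g x.1, c) hc)
    change _ = interNum _ _ q  -- keep shapes
    unfold interNum
    rw [hmain p hp1 hp2, hmain q hq1 hq2]
    exact Y.coherent r' hr' s' hs' t' ht' _ hp3 _ hq3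

end ExtCC2
section MoreCC

variable {Ω : Type*}

/-- Membership in a union-of-fibers set is constant on second coordinates of a class. -/
lemma cc_snd_mem_const [Finite Ω] (W : CoherentConfiguration Ω) {A : Set Ω}
    (hA : W.IsRelation (diagRel A)) {s : Set (Ω × Ω)} (hs : s ∈ W.S)
    {p q : Ω × Ω} (hp : p ∈ s) (hq : q ∈ s) : p.2 ∈ A ↔ q.2 ∈ A := by
  have key : ∀ p' q' : Ω × Ω, p' ∈ s → q' ∈ s → p'.2 ∈ A → q'.2 ∈ A := by
    intro p' q' hp' hq' hp2
    obtain ⟨u, hu, hmem⟩ := cc_exists_class W (p'.2, p'.2)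
    have husub : u ⊆ diagRel A :=
      (cc_rel_iff W).1 hA (p'.2, p'.2) ⟨rfl, hp2⟩ u hu hmem
    have hudiag : u ⊆ diagRel (Set.univ : Set Ω) :=
      fun x hx => ⟨(husub hx).1, trivial⟩
    have := (cc_fiber_const_snd W hs hu hudiag hp' hq').1 hmem
    exact (husub this).2
  exact ⟨key p q hp hq, key q p hq hp⟩

/-- Two coherent configurations each of whose basis relations are relations of
the other have the same basis relations. -/
lemma cc_S_subset (W₁ W₂ : CoherentConfiguration Ω)
    (h12 : ∀ s ∈ W₁.S, W₂.IsRelation s) (h21 : ∀ t ∈ W₂.S, W₁.IsRelation t) :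
    W₁.S ⊆ W₂.S := by
  intro s hs
  obtain ⟨p, hp⟩ := cc_nonempty W₁ hs
  obtain ⟨T, hT, hU⟩ := h12 s hs
  have hp' : p ∈ ⋃₀ T := hU ▸ hp
  obtain ⟨u, huT, hpu⟩ := hp'
  have huW2 : u ∈ W₂.S := hT huT
  have hus : u ⊆ s := hU ▸ Set.subset_sUnion_of_mem huT
  obtain ⟨T', hT', hU'⟩ := h21 u huW2
  have hpu' : p ∈ ⋃₀ T' := hU' ▸ hpu
  obtain ⟨v, hvT', hpv⟩ := hpu'
  have hvs : v = s := cc_class_eq W₁ (hT' hvT') hs hpv hp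
  have : s ⊆ u := hvs ▸ (hU' ▸ Set.subset_sUnion_of_mem hvT' : v ⊆ u)
  have : s = u := Set.Subset.antisymm this hus
  exact this ▸ huW2

lemma cc_S_eq (W₁ W₂ : CoherentConfiguration Ω)
    (h12 : ∀ s ∈ W₁.S, W₂.IsRelation s) (h21 : ∀ t ∈ W₂.S, W₁.IsRelation t) :
    W₁.S = W₂.S :=
  Set.Subset.antisymm (cc_S_subset W₁ W₂ h12 h21) (cc_S_subset W₂ W₁ h21 h12)

lemma diagRel_inj {A B : Set Ω} (h : diagRel A = diagRel B) : A = B := by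
  ext x
  constructor
  · intro hx
    exact (show (x, x) ∈ diagRel B from h ▸ ⟨rfl, hx⟩).2
  · intro hx
    exact (show (x, x) ∈ diagRel A from h ▸ ⟨rfl, hx⟩).2

lemma diagRel_restrict {Δ A : Set Ω} :
    diagRel (restrictSet Δ A) = restrictRel Δ (diagRel A) := by
  ext p
  constructor
  · rintro ⟨h1, h2⟩
    exact ⟨congrArg Subtype.val h1, h2⟩
  · rintro ⟨h1, h2⟩
    exact ⟨Subtype.val_injective h1, h2⟩

lemma diag_eq_of_subset_diag {s : Set (Ω × Ω)}
    (h : s ⊆ diagRel (Set.univ : Set Ω)) : s = diagRel {x | (x, x) ∈ s} := by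
  ext ⟨x, y⟩
  constructor
  · intro hxy
    have : x = y := (h hxy).1
    subst this
    exact ⟨rfl, hxy⟩
  · rintro ⟨h1, h2⟩
    have : x = y := h1
    subst this
    exact h2

end MoreCC
/-- Removing a matching: if `m` is a pendant or twin matching of
`X = WL(G)_π` and `Δ = Ω₋(m)`, then `WL(G)_π ∖ Δ = WL(G ∖ Δ)_{π ∖ {Δ}}` and
`π ∖ {Δ}` is a correct partition of `G ∖ Δ`. -/
theorem stmt_12 {Ω : Type u} [Fintype Ω] (G : SimpleGraph Ω)
    (π : Set (Set Ω)) (X : CoherentConfiguration Ω)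
    (hWL : IsWLPart G π X) (hcorrect : π = {Δ | X.IsFiber Δ})
    (m : Set (Ω × Ω)) (hm : IsPendantMatching G X m ∨ IsTwinMatching G X m)
    (Δ : Set Ω) (hΔ : Δ = OmegaMinus m)
    (Y : CoherentConfiguration ↥(Δᶜ))
    (hY : IsWLPart (G.induce (Δᶜ : Set Ω)) ((fun Γ => restrictSet Δ Γ) '' (π \ {Δ})) Y) :
    Y.S = {t | t.Nonempty ∧ ∃ s ∈ X.S, t = restrictRel Δ s} ∧
      (fun Γ => restrictSet Δ Γ) '' (π \ {Δ}) = {Γ | Y.IsFiber Γ} := by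
  classical
  have hmatch : IsMatchingCC X m := by rcases hm with h | h <;> exact h.1
  have hneq : OmegaMinus m ≠ OmegaPlus m := by rcases hm with h | h <;> exact h.2.1
  set Γ : Set Ω := OmegaPlus m with hΓdef
  have hΔfib : diagRel Δ ∈ X.S := hΔ ▸ cc_matching_minus_fiber X hmatch
  have hΓfib : diagRel Γ ∈ X.S := cc_matching_plus_fiber X hmatch
  have hΔΓne : Δ ≠ Γ := fun h => hneq (hΔ ▸ h)
  have hΔΓ : ∀ a, a ∈ Δ → a ∈ Γ → False := by
    intro a h1 h2
    have := cc_class_eq X hΔfib hΓfib (⟨rfl, h1⟩ : (a, a) ∈ diagRel Δ) ⟨rfl, h2⟩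
    exact hΔΓne (diagRel_inj this)
  have hpart : ∀ a ∈ Δ, ∃ b, (a, b) ∈ m := by
    intro a ha
    rw [hΔ] at ha
    exact ha
  -- the cloning map g
  set g : Ω → ↥(Δᶜ) := fun a =>
    if h : a ∈ Δ then ⟨Classical.choose (hpart a h),
      fun hc => hΔΓ _ hc ⟨a, Classical.choose_spec (hpart a h)⟩⟩
    else ⟨a, h⟩ with hgdef
  have hg1 : ∀ (a : Ω) (h : a ∈ Δᶜ), g a = ⟨a, h⟩ := by
    intro a h
    simp only [hgdef, dif_neg (show ¬ a ∈ Δ from h)]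
  have hgm : ∀ a ∈ Δ, (a, (g a : Ω)) ∈ m := by
    intro a h
    simp only [hgdef, dif_pos h]
    exact Classical.choose_spec (hpart a h)
  have hgm' : ∀ a ∈ Δ, ∀ b, (a, b) ∈ m → (g a : Ω) = b := by
    intro a ha b hb
    exact hmatch.2.2.1 a _ b (hgm a ha) hb
  set Γ' : Set ↥(Δᶜ) := restrictSet Δ Γ with hΓ'def
  have hg2 : ∀ a ∈ Δ, g a ∈ Γ' := fun a ha => ⟨a, hgm a ha⟩
  have hginj : Set.InjOn g Δ := by
    intro a ha b hb hab
    exact hmatch.2.2.2 a b _ (hgm a ha) (hab ▸ hgm b hb)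
  have hgsurj : ∀ c ∈ Γ', ∃ a ∈ Δ, g a = c := by
    rintro c ⟨a, ham⟩
    have haΔ : a ∈ Δ := hΔ ▸ ⟨(c : Ω), ham⟩
    exact ⟨a, haΔ, Subtype.val_injective (hgm' a haΔ _ ham)⟩
  -- π facts
  have hΓπ : Γ ∈ π := by rw [hcorrect]; exact hΓfib
  have hΓ'img : Γ' ∈ (fun Γ => restrictSet Δ Γ) '' (π \ {Δ}) :=
    ⟨Γ, ⟨hΓπ, fun h => hΔΓne (by simpa using h.symm)⟩, rfl⟩
  have hYdiagΓ' : Y.IsRelation (diagRel Γ') := hY.2.1 Γ' hΓ'img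
  have hfib2 : ∀ s ∈ Y.S, ∀ p ∈ s, ∀ q ∈ s, (p.2 ∈ Γ' ↔ q.2 ∈ Γ') :=
    fun s hs p hp q hq => cc_snd_mem_const Y hYdiagΓ' hs hp hq
  -- the two configurations
  set Z := restrictCC X Δ hΔfib with hZdef
  set W := extCC Y g Γ' hg1 hg2 hginj hgsurj hfib2 with hWdef
  -- Y ≤ Z
  have hadj_restr : adjRel (G.induce (Δᶜ : Set Ω)) = restrictRel Δ (adjRel G) := rfl
  have hYZ : CCle Y Z := by
    apply hY.2.2
    · rw [hadj_restr]
      exact restrict_isRelation X Δ hΔfib hWL.1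
    · rintro Γ0 ⟨Φ, ⟨hΦπ, hΦne⟩, rfl⟩
      have hΦfib : diagRel Φ ∈ X.S := by rw [hcorrect] at hΦπ; exact hΦπ
      rw [diagRel_restrict]
      exact restrict_isRelation X Δ hΔfib (cc_singleton_rel X hΦfib)
  -- X ≤ W
  -- helper facts for the extension direction
  have hgcoe : ∀ c : ↥(Δᶜ), g (c : Ω) = c := extg_coe hg1
  have hadjXsat := (cc_rel_iff X).1 hWL.1
  have hmadj : ∀ a0 b0 : Ω, (a0, b0) ∈ m → G.Adj a0 b0 → m ⊆ adjRel G :=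
    fun a0 b0 h1 h2 => hadjXsat (a0, b0) h2 m hmatch.1 h1
  have hadjYsat := (cc_rel_iff Y).1 hY.1
  have hYadjsub : ∀ u ∈ Y.S, ∀ c d : ↥(Δᶜ), (c, d) ∈ u → G.Adj (c : Ω) (d : Ω) →
      ∀ c' d' : ↥(Δᶜ), (c', d') ∈ u → G.Adj (c' : Ω) (d' : Ω) := by
    intro u hu c d hcd hGcd c' d' hcd'
    exact hadjYsat (c, d) hGcd u hu hcd hcd'
  have hsirr : ∀ u ∈ Y.S, ∀ p ∈ u, p.1 ≠ p.2 → ∀ q ∈ u, q.1 ≠ q.2 := by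
    intro u hu p hp hne q hq heq
    obtain ⟨q1, q2⟩ := q
    have heq' : q1 = q2 := heq
    subst heq'
    exact hne (cc_diag_class_s12 Y hu hq hp).1
  have hXW : CCle X W := by
    apply hWL.2.2
    · -- the arc set of G is a relation of the extension W
      rw [cc_rel_iff]
      rintro ⟨a, b⟩ hadj t htW hpt
      have hadj' : G.Adj a b := hadj
      obtain ⟨hne, e1, e2, u, hu, rfl⟩ := htW
      obtain ⟨ha, hb, hab⟩ := hpt
      cases e1 <;> cases e2
      · -- both in Δᶜ
        have haC : a ∈ Δᶜ := ha
        have hbC : b ∈ Δᶜ := hb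
        have hGab : G.Adj ((g a : Ω)) ((g b : Ω)) := by
          rw [hg1 a haC, hg1 b hbC]; exact hadj'
        rintro ⟨x, y⟩ ⟨hx, hy, hxy⟩
        have hxC : x ∈ Δᶜ := hx
        have hyC : y ∈ Δᶜ := hy
        have := hYadjsub u hu (g a) (g b) hab hGab (g x) (g y) hxy
        rwa [hg1 x hxC, hg1 y hyC] at this
      · -- a ∈ Δᶜ, b ∈ Δ
        have haC : a ∈ Δᶜ := ha
        have hbD : b ∈ Δ := hb
        by_cases hd : g a = g b
        · have hbeq : (g b : Ω) = a := by rw [← hd, hg1 a haC]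
          have hmba : (b, a) ∈ m := hbeq ▸ hgm b hbD
          have hmsub : m ⊆ adjRel G := hmadj b a hmba hadj'.symm
          rw [hd] at hab
          have hudiag := cc_diag_class_s12 Y hu hab
          rintro ⟨x, y⟩ ⟨hx, hy, hxy⟩
          have hxC : x ∈ Δᶜ := hx
          have hyD : y ∈ Δ := hy
          have hgxy : g x = g y := (hudiag hxy).1
          have hyx : (g y : Ω) = x := by rw [← hgxy, hg1 x hxC]
          have : (y, x) ∈ m := hyx ▸ hgm y hyD
          exact (hmsub this).symm
        · rcases hm with hpend | htwin
          · exfalso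
            have h2 : a = (g b : Ω) := (hpend.2.2 (b, (g b : Ω)) (hgm b hbD)).2 a hadj'.symm
            exact hd (show g a = g b by rw [hg1 a haC]; exact Subtype.ext h2)
          · have htw := htwin.2.2 (b, (g b : Ω)) (hgm b hbD)
            have hanb : a ≠ b := fun h => haC (h ▸ hbD)
            have hang : a ≠ (g b : Ω) := fun h =>
              hd (show g a = g b by rw [hg1 a haC]; exact Subtype.ext h)
            have hGab : G.Adj ((g a : Ω)) ((g b : Ω)) := by
              rw [hg1 a haC]
              exact (htw a hanb hang).1 hadj'
            rintro ⟨x, y⟩ ⟨hx, hy, hxy⟩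
            have hxC : x ∈ Δᶜ := hx
            have hyD : y ∈ Δ := hy
            have hgne : g x ≠ g y := hsirr u hu (g a, g b) hab hd (g x, g y) hxy
            have hxny : x ≠ y := fun h => hxC (h ▸ hyD)
            have hxng : x ≠ (g y : Ω) := fun h =>
              hgne (show g x = g y by rw [hg1 x hxC]; exact Subtype.ext h)
            have hAdjxgy : G.Adj x ((g y : Ω)) := by
              have := hYadjsub u hu (g a) (g b) hab hGab (g x) (g y) hxy
              rwa [hg1 x hxC] at this
            have htwy := htwin.2.2 (y, (g y : Ω)) (hgm y hyD)
            exact (htwy x hxny hxng).2 hAdjxgy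
      · -- a ∈ Δ, b ∈ Δᶜ
        have haD : a ∈ Δ := ha
        have hbC : b ∈ Δᶜ := hb
        by_cases hd : g a = g b
        · have hbeq : (g a : Ω) = b := by rw [hd, hg1 b hbC]
          have hmab : (a, b) ∈ m := hbeq ▸ hgm a haD
          have hmsub : m ⊆ adjRel G := hmadj a b hmab hadj'
          rw [hd] at hab
          have hudiag := cc_diag_class_s12 Y hu hab
          rintro ⟨x, y⟩ ⟨hx, hy, hxy⟩
          have hxD : x ∈ Δ := hx
          have hyC : y ∈ Δᶜ := hy
          have hgxy : g x = g y := (hudiag hxy).1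
          have hxy' : (g x : Ω) = y := by rw [hgxy, hg1 y hyC]
          exact hmsub (hxy' ▸ hgm x hxD)
        · rcases hm with hpend | htwin
          · exfalso
            have h2 : b = (g a : Ω) := (hpend.2.2 (a, (g a : Ω)) (hgm a haD)).2 b hadj'
            exact hd (show g a = g b by rw [hg1 b hbC]; exact Subtype.ext h2.symm)
          · have htw := htwin.2.2 (a, (g a : Ω)) (hgm a haD)
            have hbna : b ≠ a := fun h => hbC (h ▸ haD)
            have hbng : b ≠ (g a : Ω) := fun h =>
              hd (show g a = g b by rw [hg1 b hbC]; exact Subtype.ext h.symm)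
            have hGab : G.Adj ((g a : Ω)) ((g b : Ω)) := by
              rw [hg1 b hbC]
              exact ((htw b hbna hbng).1 hadj'.symm).symm
            rintro ⟨x, y⟩ ⟨hx, hy, hxy⟩
            have hxD : x ∈ Δ := hx
            have hyC : y ∈ Δᶜ := hy
            have hgne : g x ≠ g y := hsirr u hu (g a, g b) hab hd (g x, g y) hxy
            have hynx : y ≠ x := fun h => hyC (h ▸ hxD)
            have hyng : y ≠ (g x : Ω) := fun h =>
              hgne (show g x = g y by rw [hg1 y hyC]; exact Subtype.ext h.symm)
            have hAdjgxy : G.Adj ((g x : Ω)) y := by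
              have := hYadjsub u hu (g a) (g b) hab hGab (g x) (g y) hxy
              rwa [hg1 y hyC] at this
            have htwx := htwin.2.2 (x, (g x : Ω)) (hgm x hxD)
            exact ((htwx y hynx hyng).2 hAdjgxy.symm).symm
      · -- both in Δ
        have haD : a ∈ Δ := ha
        have hbD : b ∈ Δ := hb
        rcases hm with hpend | htwin
        · exfalso
          have h2 : b = (g a : Ω) := (hpend.2.2 (a, (g a : Ω)) (hgm a haD)).2 b hadj'
          exact (g a).2 (show (g a : Ω) ∈ Δ by rw [← h2]; exact hbD)
        · have hanb : a ≠ b := hadj'.ne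
          have hgab : g a ≠ g b := fun h => hanb (hginj haD hbD h)
          have htwa := htwin.2.2 (a, (g a : Ω)) (hgm a haD)
          have htwb := htwin.2.2 (b, (g b : Ω)) (hgm b hbD)
          have hAdjbga : G.Adj b ((g a : Ω)) :=
            (htwa b hanb.symm (fun h => (g a).2 (show (g a : Ω) ∈ Δ by
              have h' : b = (g a : Ω) := h
              rw [← h']; exact hbD))).1 hadj'.symm
          have hGab : G.Adj ((g a : Ω)) ((g b : Ω)) :=
            (htwb ((g a : Ω)) (fun h => (g a).2 (show (g a : Ω) ∈ Δ by
                have h' : (g a : Ω) = b := h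
                rw [h']; exact hbD))
              (fun h => hgab (Subtype.ext h))).1 hAdjbga.symm
          rintro ⟨x, y⟩ ⟨hx, hy, hxy⟩
          have hxD : x ∈ Δ := hx
          have hyD : y ∈ Δ := hy
          have hgne : g x ≠ g y := hsirr u hu (g a, g b) hab hgab (g x, g y) hxy
          have hxny : x ≠ y := fun h => hgne (h ▸ rfl)
          have hAdj' : G.Adj ((g x : Ω)) ((g y : Ω)) :=
            hYadjsub u hu (g a) (g b) hab hGab (g x) (g y) hxy
          have hAdjgxy : G.Adj ((g x : Ω)) y :=
            ((htwin.2.2 (y, (g y : Ω)) (hgm y hyD)) ((g x : Ω))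
              (fun h => (g x).2 (show (g x : Ω) ∈ Δ by
                have h' : (g x : Ω) = y := h
                rw [h']; exact hyD))
              (fun h => hgne (Subtype.ext h))).2 hAdj'
          exact ((htwin.2.2 (x, (g x : Ω)) (hgm x hxD)) y hxny.symm
            (fun h => (g x).2 (show (g x : Ω) ∈ Δ by
              have h' : y = (g x : Ω) := h
              rw [← h']; exact hyD))).2
              hAdjgxy.symm |>.symm
    · -- every class of π is a relation of W
      intro Φ hΦπ
      have hΦfib : diagRel Φ ∈ X.S := by rw [hcorrect] at hΦπ; exact hΦπ
      rw [cc_rel_iff]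
      rintro ⟨a, a'⟩ ⟨haa, haΦ⟩ t htW hpt
      have haa' : a = a' := haa
      subst haa'
      obtain ⟨hne, e1, e2, u, hu, rfl⟩ := htW
      obtain ⟨h1, h2, h3⟩ := hpt
      have he12 : e1 = e2 := extSide_eq_of_mem h1 h2
      subst he12
      have hudiag := cc_diag_class_s12 Y hu h3
      cases e1
      · -- a ∈ Δᶜ
        have haC : a ∈ Δᶜ := h1
        have hΦΔ : Φ ≠ Δ := fun h => haC (h ▸ haΦ)
        have hYd : Y.IsRelation (diagRel (restrictSet Δ Φ)) :=
          hY.2.1 _ ⟨Φ, ⟨hΦπ, fun h => hΦΔ (by simpa using h)⟩, rfl⟩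
        have hgaΦ : g a ∈ restrictSet Δ Φ := by
          show (g a : Ω) ∈ Φ
          rw [hg1 a haC]
          exact haΦ
        have husub : u ⊆ diagRel (restrictSet Δ Φ) :=
          (cc_rel_iff Y).1 hYd (g a, g a) ⟨rfl, hgaΦ⟩ u hu h3
        rintro ⟨x, y⟩ ⟨hx, hy, hxy⟩
        have hxC : x ∈ Δᶜ := hx
        have hyC : y ∈ Δᶜ := hy
        refine ⟨extg_side_inj hg1 hginj hx hy (husub hxy).1, ?_⟩
        have : (g x : Ω) ∈ Φ := (husub hxy).2
        rwa [hg1 x hxC] at this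
      · -- a ∈ Δ
        have haD : a ∈ Δ := h1
        have hΦΔ : Φ = Δ :=
          diagRel_inj (cc_class_eq X hΦfib hΔfib ⟨rfl, haΦ⟩ ⟨rfl, haD⟩)
        subst hΦΔ
        rintro ⟨x, y⟩ ⟨hx, hy, hxy⟩
        exact ⟨extg_side_inj hg1 hginj hx hy (hudiag hxy).1, hx⟩
  -- every restriction of an X-class is a Y-relation
  have hZY : ∀ s ∈ X.S, Y.IsRelation (restrictRel Δ s) := by
    intro s hs
    have hsW : W.IsRelation s := hXW s (cc_singleton_rel X hs)
    rw [cc_rel_iff]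
    intro p hp u hu hpu
    have hp' : ((p.1 : Ω), (p.2 : Ω)) ∈ s := hp
    have hmem : ((p.1 : Ω), (p.2 : Ω)) ∈ extT Δ g false false u := by
      refine ⟨p.1.2, p.2.2, ?_⟩
      rw [extg_coe hg1, extg_coe hg1]
      exact hpu
    have htW : extT Δ g false false u ∈ W.S :=
      ⟨⟨_, hmem⟩, false, false, u, hu, rfl⟩
    have hsub : extT Δ g false false u ⊆ s :=
      (cc_rel_iff W).1 hsW _ hp' _ htW hmem
    intro c hc
    have : ((c.1 : Ω), (c.2 : Ω)) ∈ extT Δ g false false u := by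
      refine ⟨c.1.2, c.2.2, ?_⟩
      rw [extg_coe hg1, extg_coe hg1]
      exact hc
    exact hsub this
  -- conclusion 1
  have hYS : Y.S = Z.S := by
    apply cc_S_eq
    · intro s hs
      exact hYZ s (cc_singleton_rel Y hs)
    · rintro t ⟨hne, s, hsX, rfl⟩
      exact hZY s hsX
  refine ⟨hYS, ?_⟩
  -- conclusion 2
  ext Γ0
  constructor
  · rintro ⟨Φ, ⟨hΦπ, hΦne⟩, rfl⟩
    have hΦfib : diagRel Φ ∈ X.S := by rw [hcorrect] at hΦπ; exact hΦπ
    have hΦΔ : Φ ≠ Δ := fun h => hΦne (by simpa using h)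
    obtain ⟨⟨x, x'⟩, hx⟩ := cc_nonempty X hΦfib
    have hxx : x = x' := hx.1
    subst hxx
    have hxΔ : x ∉ Δ := by
      intro hxd
      exact hΦΔ (diagRel_inj (cc_class_eq X hΦfib hΔfib hx ⟨rfl, hxd⟩))
    show diagRel (restrictSet Δ Φ) ∈ Y.S
    rw [hYS, hZdef, restrictCC_S, diagRel_restrict]
    exact ⟨⟨(⟨x, hxΔ⟩, ⟨x, hxΔ⟩), hx⟩, diagRel Φ, hΦfib, rfl⟩
  · intro hfib
    have : diagRel Γ0 ∈ Z.S := hYS ▸ hfib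
    obtain ⟨hne, s, hsX, heq⟩ := this
    obtain ⟨⟨c, c'⟩, hc⟩ := hne
    have hcc : c = c' := hc.1
    subst hcc
    have hcs : ((c : Ω), (c : Ω)) ∈ s := by
      have : (⟨c, c⟩ : ↥(Δᶜ) × ↥(Δᶜ)) ∈ restrictRel Δ s := heq ▸ hc
      exact this
    have hsdiag : s ⊆ diagRel (Set.univ : Set Ω) := cc_diag_class_s12 X hsX hcs
    have hseq : s = diagRel {x | (x, x) ∈ s} := diag_eq_of_subset_diag hsdiag
    refine ⟨{x | (x, x) ∈ s}, ⟨?_, ?_⟩, ?_⟩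
    · rw [hcorrect]
      exact (hseq ▸ hsX : diagRel {x | (x, x) ∈ s} ∈ X.S)
    · intro h
      have : (c : Ω) ∈ Δ := by
        have := (h : {x | (x, x) ∈ s} = Δ)
        exact this ▸ hcs
      exact c.2 this
    · ext d
      show (d : Ω) ∈ {x | (x, x) ∈ s} ↔ d ∈ Γ0
      constructor
      · intro hd
        have : (d, d) ∈ restrictRel Δ s := hd
        rw [← heq] at this
        exact this.2
      · intro hd
        have : (d, d) ∈ diagRel Γ0 := ⟨rfl, hd⟩
        rw [heq] at this
        exact this
end
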